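/- arXiv:2105.06710 — 2 statements merged into one kernel-verified Lean document; each statement's English description precedes it below -/
import Mathlib

section
/- (Bonnet–Myers type inequality) Let H be a hypergraph such that for some κ > 0 the h-LLY–Ricci curvature satisfies κ̃(h;x,y) ≥ κ for all adjacent vertices x, y. Then the diameter of H satisfies diam(H) ≤ ⌊(h'(1)/h(1)) · (2/κ)⌋. -/
open Filter Set Classical

noncomputable section

/-- A hypergraph: a vertex type together with a family of hyperedges. -/
structure Hypergraph' (V : Type*) where
  E : Set (Set V)

namespace Hypergraph'

variable {V : Type*}

/-- Two distinct vertices are adjacent if some hyperedge contains both. -/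
def Adj (H : Hypergraph' V) (x y : V) : Prop :=
  x ≠ y ∧ ∃ e ∈ H.E, x ∈ e ∧ y ∈ e

/-- There is a path of length `n` from `x` to `y` (each consecutive pair lies
in a common hyperedge). -/
def IsPath (H : Hypergraph' V) (x y : V) (n : ℕ) : Prop :=
  ∃ f : ℕ → V, f 0 = x ∧ f n = y ∧ ∀ i < n, ∃ e ∈ H.E, f i ∈ e ∧ f (i + 1) ∈ e

/-- The graph distance on a hypergraph: the shortest length of a path. -/
def dist (H : Hypergraph' V) (x y : V) : ℕ :=
  sInf {n | H.IsPath x y n}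

def Connected (H : Hypergraph' V) : Prop := ∀ x y : V, ∃ n, H.IsPath x y n

def LocallyFinite (H : Hypergraph' V) : Prop := ∀ x : V, {y | H.Adj x y}.Finite

/-- A hypergraph is simple if no hyperedge is contained in a different one. -/
def Simple (H : Hypergraph' V) : Prop :=
  ∀ e₁ ∈ H.E, ∀ e₂ ∈ H.E, e₁ ≠ e₂ → ¬e₁ ⊆ e₂

/-- The degree of a vertex: the number of its neighbours. -/
def degree (H : Hypergraph' V) (x : V) : ℕ := {y | H.Adj x y}.ncard

end Hypergraph'

/-- A finitely supported probability function on `V`. -/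
def IsProb {V : Type*} (μ : V → ℝ) : Prop :=
  (∀ v, 0 ≤ μ v) ∧ (Function.support μ).Finite ∧ ∑' v, μ v = 1

/-- A coupling of two probability functions. -/
def IsCoupling {V : Type*} (π : V → V → ℝ) (μ ν : V → ℝ) : Prop :=
  (∀ x y, 0 ≤ π x y) ∧ (∀ x, ∑' y, π x y = μ x) ∧ (∀ y, ∑' x, π x y = ν y)

/-- The L¹-Wasserstein distance with respect to the graph distance of `H`. -/
def W1 {V : Type*} (H : Hypergraph' V) (μ ν : V → ℝ) : ℝ :=
  sInf {c | ∃ π, IsCoupling π μ ν ∧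
    c = ∑' p : V × V, (H.dist p.1 p.2 : ℝ) * π p.1 p.2}

/-- A sequence of probability measures from `μ` to `ν` each of whose increments
is supported in a single hyperedge. -/
def WhAdmissible {V : Type*} (H : Hypergraph' V) (μ ν : V → ℝ) (I : ℕ)
    (ξ : ℕ → V → ℝ) : Prop :=
  ξ 0 = μ ∧ ξ I = ν ∧ (∀ i ≤ I, IsProb (ξ i)) ∧
    ∀ i < I, ∃ e ∈ H.E, Function.support (fun v => ξ (i + 1) v - ξ i v) ⊆ e

/-- The new transport distance `W_h`. -/
def Wh {V : Type*} (H : Hypergraph' V) (h : ℝ → ℝ) (μ ν : V → ℝ) : ℝ :=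
  sInf {c | ∃ I ξ, WhAdmissible H μ ν I ξ ∧
    c = ∑ i ∈ Finset.range I, h (W1 H (ξ i) (ξ (i + 1)))}

/-- Assumptions on the concave cost function `h`, with one-sided derivatives
`D0 = h'(0)` and `D1 = h'(1)`. -/
structure CostFn (h : ℝ → ℝ) (D0 D1 : ℝ) : Prop where
  nonneg : ∀ x ∈ Set.Icc (0 : ℝ) 1, 0 ≤ h x
  mono : MonotoneOn h (Set.Icc (0 : ℝ) 1)
  cont : ContinuousOn h (Set.Icc (0 : ℝ) 1)
  concave : ConcaveOn ℝ (Set.Icc (0 : ℝ) 1) h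
  zero : h 0 = 0
  d0_pos : 0 < D0
  d0 : Filter.Tendsto (fun t => h t / t) (nhdsWithin 0 (Set.Ioi 0)) (nhds D0)
  d1 : Filter.Tendsto (fun t => (h 1 - h t) / (1 - t))
    (nhdsWithin 1 (Set.Iio 1)) (nhds D1)

/-- The Dirac measure at a point, as a probability function. -/
def dirac {V : Type*} (x : V) : V → ℝ := fun v => if v = x then 1 else 0

/-- The `α`-lazy uniform random walk at `x`. -/
def rw {V : Type*} (H : Hypergraph' V) (α : ℝ) (x : V) : V → ℝ :=
  fun v => if v = x then α else if H.Adj x v then (1 - α) / (H.degree x) else 0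

/-- The `(α,h)`-Ollivier–Ricci curvature. -/
def ORic {V : Type*} (H : Hypergraph' V) (h : ℝ → ℝ) (α : ℝ) (x y : V) : ℝ :=
  1 - Wh H h (rw H α x) (rw H α y) / Wh H h (dirac x) (dirac y)

/-- The `h`-LLY–Ricci curvature. -/
def hLLY {V : Type*} (H : Hypergraph' V) (h : ℝ → ℝ) (x y : V) : ℝ :=
  Filter.liminf (fun α => ORic H h α x y / (1 - α)) (nhdsWithin 1 (Set.Iio 1))

namespace BM
open Hypergraph'
variable {V : Type*} (H : Hypergraph' V)

lemma isPath_refl (x : V) : H.IsPath x x 0 := ⟨fun _ => x, rfl, rfl, by omega⟩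

lemma isPath_trans {x y z : V} {m n : ℕ} (h1 : H.IsPath x y m) (h2 : H.IsPath y z n) :
    H.IsPath x z (m + n) := by
  obtain ⟨f, hf0, hfm, hf⟩ := h1
  obtain ⟨g, hg0, hgn, hg⟩ := h2
  refine ⟨fun i => if i ≤ m then f i else g (i - m), by simp [hf0], ?_, ?_⟩
  · by_cases hn : n = 0
    · subst hn
      simp only [Nat.add_zero, le_refl, if_pos]
      rw [hfm, ← hg0]; exact hgn
    · have hmn : ¬ (m + n ≤ m) := by omega
      simp only [hmn, if_false]
      rw [show m + n - m = n by omega, hgn]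
  · intro i hi
    by_cases him : i + 1 ≤ m
    · have h1 : i ≤ m := by omega
      simp only [h1, him, if_pos]
      exact hf i (by omega)
    · have key : (if i ≤ m then f i else g (i - m)) = g (i - m) := by
        by_cases hle : i ≤ m
        · have : i = m := by omega
          subst this
          simp only [le_refl, if_pos, Nat.sub_self, hfm, hg0]
        · simp [hle]
      simp only [key, him, if_false]
      rw [show i + 1 - m = (i - m) + 1 by omega]
      exact hg (i - m) (by omega)

lemma dist_le {x y : V} {n : ℕ} (hp : H.IsPath x y n) : H.dist x y ≤ n := Nat.sInf_le hp

lemma isPath_dist (hconn : H.Connected) (x y : V) : H.IsPath x y (H.dist x y) :=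
  Nat.sInf_mem (hconn x y)

lemma dist_triangle (hconn : H.Connected) (x y z : V) :
    H.dist x z ≤ H.dist x y + H.dist y z :=
  dist_le H (isPath_trans H (isPath_dist H hconn x y) (isPath_dist H hconn y z))

lemma dist_self (x : V) : H.dist x x = 0 := Nat.le_zero.mp (dist_le H (isPath_refl H x))

lemma eq_of_dist_eq_zero (hconn : H.Connected) {x y : V} (h : H.dist x y = 0) : x = y := by
  have hp := isPath_dist H hconn x y
  rw [h] at hp
  obtain ⟨f, h0, h1, -⟩ := hp
  rw [← h0, h1]

lemma one_le_dist (hconn : H.Connected) {x y : V} (h : x ≠ y) : 1 ≤ H.dist x y := by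
  rcases Nat.eq_zero_or_pos (H.dist x y) with h0 | h1
  · exact absurd (eq_of_dist_eq_zero H hconn h0) h
  · exact h1

lemma dist_le_one_of_mem {e : Set V} (he : e ∈ H.E) {u v : V} (hu : u ∈ e) (hv : v ∈ e) :
    H.dist u v ≤ 1 := by
  refine dist_le H ⟨fun i => if i = 0 then u else v, rfl, rfl, fun i hi => ?_⟩
  interval_cases i
  exact ⟨e, he, by simpa using hu, by simpa using hv⟩

lemma dist_eq_one_of_adj (hconn : H.Connected) {u v : V} (h : H.Adj u v) : H.dist u v = 1 := by
  obtain ⟨hne, e, he, hu, hv⟩ := h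
  exact le_antisymm (dist_le_one_of_mem H he hu hv) (one_le_dist H hconn hne)

lemma consec_ne_of_min {x y : V} {n : ℕ} {f : ℕ → V} (h0 : f 0 = x) (hn : f n = y)
    (hstep : ∀ i < n, ∃ e ∈ H.E, f i ∈ e ∧ f (i + 1) ∈ e)
    (hmin : ∀ m < n, ¬ H.IsPath x y m) {i : ℕ} (hi : i < n) : f i ≠ f (i + 1) := by
  intro heq
  apply hmin (n - 1) (by omega)
  refine ⟨fun j => if j ≤ i then f j else f (j + 1), by simp [h0], ?_, ?_⟩
  · by_cases hik : n - 1 ≤ i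
    · have hieq : n - 1 = i := by omega
      show (if n - 1 ≤ i then f (n-1) else f (n - 1 + 1)) = y
      rw [if_pos (le_of_eq hieq), hieq, heq, show i + 1 = n by omega, hn]
    · show (if n - 1 ≤ i then f (n-1) else f (n - 1 + 1)) = y
      rw [if_neg hik, show n - 1 + 1 = n by omega, hn]
  · intro j hj
    by_cases hji : j + 1 ≤ i
    · simp only [show j ≤ i by omega, hji, if_pos]
      exact hstep j (by omega)
    · by_cases hji' : j ≤ i
      · have : j = i := by omega
        subst this
        simp only [le_refl, if_pos, hji, if_neg, heq]
        exact hstep (j + 1) (by omega)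
      · simp only [hji, hji', if_neg]
        exact hstep (j + 1) (by omega)

lemma exists_adj_of_ne (hconn : H.Connected) {x y : V} (hxy : x ≠ y) : ∃ u v : V, H.Adj u v := by
  set n := H.dist x y with hd
  have hn : 1 ≤ n := one_le_dist H hconn hxy
  obtain ⟨f, h0, h1, hstep⟩ := isPath_dist H hconn x y
  have hne : f 0 ≠ f 1 := by
    refine consec_ne_of_min H h0 h1 hstep (fun m hm hp => ?_) hn
    exact absurd (dist_le H hp) (by omega)
  obtain ⟨e, he, hu, hv⟩ := hstep 0 hn
  exact ⟨f 0, f 1, hne, e, he, hu, hv⟩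


lemma isProb_summable {μ : V → ℝ} (hμ : IsProb μ) : Summable μ :=
  summable_of_ne_finset_zero (s := hμ.2.1.toFinset)
    (fun v hv => by simpa [Function.mem_support] using fun hne => hv (hμ.2.1.mem_toFinset.mpr hne))

lemma isProb_dirac (x : V) : IsProb (dirac x) := by
  refine ⟨fun v => by by_cases h : v = x <;> simp [dirac, h], ?_, tsum_ite_eq x 1⟩
  exact Set.Finite.subset (Set.finite_singleton x)
    (fun v hv => by by_cases h : v = x <;> simp [dirac, h, Function.mem_support] at hv ⊢)

lemma not_summable_of_one_le {ι : Type*} {f : ι → ℝ} {B : Set ι} (hB : B.Infinite)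
    (hf : ∀ i ∈ B, 1 ≤ f i) : ¬ Summable f := by
  intro hs
  have h1 : (f ⁻¹' Set.Iio 1)ᶜ.Finite := by
    have := hs.tendsto_cofinite_zero (Iio_mem_nhds (one_pos))
    simpa [Filter.mem_cofinite] using this
  exact hB (h1.subset (fun i hi => by simpa using not_lt.mpr (hf i hi)))

lemma whAdmissible_single {μ ν : V → ℝ} {e : Set V} (he : e ∈ H.E) (hμ : IsProb μ)
    (hν : IsProb ν) (hsupp : Function.support (fun v => ν v - μ v) ⊆ e) :
    WhAdmissible H μ ν 1 (fun i => if i = 0 then μ else ν) := by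
  refine ⟨by simp, by simp, fun i _ => ?_, fun i hi => ?_⟩
  · by_cases hc : i = 0 <;> simp [hc, hμ, hν]
  · have hc : i = 0 := by omega
    subst hc
    exact ⟨e, he, by simpa using hsupp⟩

lemma dirac_diff_support {u v : V} {e : Set V} (hu : u ∈ e) (hv : v ∈ e) :
    Function.support (fun w => dirac v w - dirac u w) ⊆ e := by
  intro w hw
  simp only [Function.mem_support] at hw
  by_cases hwu : w = u
  · exact hwu ▸ hu
  · by_cases hwv : w = v
    · exact hwv ▸ hv
    · exact absurd (by simp [dirac, hwu, hwv]) hw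

section InfiniteV
variable [Infinite V]

lemma W1_eq_zero (hconn : H.Connected) {μ ν : V → ℝ} (hμ : IsProb μ) (hν : IsProb ν) :
    W1 H μ ν = 0 := by
  set A : Set V := (Function.support μ ∪ Function.support ν)ᶜ with hA
  have hAinf : A.Infinite := Set.Finite.infinite_compl (hμ.2.1.union hν.2.1)
  have hmuA : ∀ u ∈ A, μ u = 0 := fun u hu => by
    by_contra hne
    exact hu (Set.mem_union_left _ (Function.mem_support.mpr hne))
  have hnuA : ∀ u ∈ A, ν u = 0 := fun u hu => by
    by_contra hne
    exact hu (Set.mem_union_right _ (Function.mem_support.mpr hne))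
  set π : V → V → ℝ := fun u v => μ u * ν v + (if u ∈ A ∧ v ∈ A then 1 else 0) with hπ
  have hπnn : ∀ u v, 0 ≤ π u v := fun u v => by
    have := mul_nonneg (hμ.1 u) (hν.1 v)
    by_cases h : u ∈ A ∧ v ∈ A <;> simp [hπ, h] <;> linarith
  have hrow : ∀ u, ∑' v, π u v = μ u := by
    intro u
    by_cases hu : u ∈ A
    · have hμu : μ u = 0 := hmuA u hu
      have : (fun v => π u v) = fun v => if v ∈ A then (1:ℝ) else 0 := by
        funext v
        by_cases hv : v ∈ A <;> simp [hπ, hμu, hu, hv]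
      rw [this, tsum_eq_zero_of_not_summable, hμu]
      exact not_summable_of_one_le hAinf (fun v hv => by simp [hv])
    · have : (fun v => π u v) = fun v => μ u * ν v := by
        funext v
        simp [hπ, hu]
      rw [this, tsum_mul_left, hν.2.2, mul_one]
  have hcol : ∀ v, ∑' u, π u v = ν v := by
    intro v
    by_cases hv : v ∈ A
    · have hνv : ν v = 0 := hnuA v hv
      have : (fun u => π u v) = fun u => if u ∈ A then (1:ℝ) else 0 := by
        funext u
        by_cases hu : u ∈ A <;> simp [hπ, hνv, hu, hv]
      rw [this, tsum_eq_zero_of_not_summable, hνv]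
      exact not_summable_of_one_le hAinf (fun u hu => by simp [hu])
    · have : (fun u => π u v) = fun u => ν v * μ u := by
        funext u
        simp [hπ, hv, mul_comm]
      rw [this, tsum_mul_left, hμ.2.2, mul_one]
  have hcoup : IsCoupling π μ ν := ⟨hπnn, hrow, hcol⟩
  have hcost : ∑' p : V × V, (H.dist p.1 p.2 : ℝ) * π p.1 p.2 = 0 := by
    apply tsum_eq_zero_of_not_summable
    obtain ⟨a0, ha0⟩ := hAinf.nonempty
    have hBinf : {p : V × V | p.1 ∈ A ∧ p.2 ∈ A ∧ p.1 ≠ p.2}.Infinite := by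
      have himg : ((fun v => ((a0, v) : V × V)) '' (A \ {a0})).Infinite :=
        Set.Infinite.image (fun u _ v _ h => by simpa using congrArg Prod.snd h)
          (hAinf.diff (Set.finite_singleton a0))
      refine himg.mono ?_
      rintro p ⟨v, ⟨hvA, hv0⟩, rfl⟩
      exact ⟨ha0, hvA, by simpa using fun h => hv0 (by simp [← h])⟩
    apply not_summable_of_one_le hBinf
    rintro ⟨u, v⟩ ⟨huA, hvA, hne⟩
    have hd : 1 ≤ H.dist u v := one_le_dist H hconn hne
    have hπ1 : 1 ≤ π u v := by
      have := mul_nonneg (hμ.1 u) (hν.1 v)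
      simp only [hπ, if_pos (And.intro huA hvA)]
      linarith
    calc (1:ℝ) = 1 * 1 := by ring
    _ ≤ (H.dist u v : ℝ) * π u v := by
        exact mul_le_mul (by exact_mod_cast hd) hπ1 one_pos.le (by positivity)
  have hmem : (0:ℝ) ∈ {c | ∃ π, IsCoupling π μ ν ∧
      c = ∑' p : V × V, (H.dist p.1 p.2 : ℝ) * π p.1 p.2} := ⟨π, hcoup, hcost.symm⟩
  have hnn : ∀ c ∈ {c | ∃ π, IsCoupling π μ ν ∧
      c = ∑' p : V × V, (H.dist p.1 p.2 : ℝ) * π p.1 p.2}, (0:ℝ) ≤ c := by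
    rintro c ⟨π', hπ', rfl⟩
    exact tsum_nonneg (fun p => mul_nonneg (by positivity) (hπ'.1 _ _))
  exact le_antisymm (csInf_le ⟨0, hnn⟩ hmem) (le_csInf ⟨0, hmem⟩ hnn)

lemma Wh_dirac_eq_zero (hconn : H.Connected) {h : ℝ → ℝ} (h0 : h 0 = 0) {u v : V} (hadj : H.Adj u v) :
    Wh H h (dirac u) (dirac v) = 0 := by
  obtain ⟨hne, e, he, hu, hv⟩ := hadj
  have hset : {c | ∃ I ξ, WhAdmissible H (dirac u) (dirac v) I ξ ∧
      c = ∑ i ∈ Finset.range I, h (W1 H (ξ i) (ξ (i + 1)))} = {0} := by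
    apply Set.eq_singleton_iff_unique_mem.mpr
    constructor
    · refine ⟨1, fun i => if i = 0 then dirac u else dirac v,
        whAdmissible_single H he (isProb_dirac u) (isProb_dirac v)
          (dirac_diff_support hu hv), ?_⟩
      rw [Finset.sum_range_one]
      norm_num
      rw [W1_eq_zero H hconn (isProb_dirac u) (isProb_dirac v), h0]
    · rintro c ⟨I, ξ, hadm, rfl⟩
      apply Finset.sum_eq_zero
      intro i hi
      simp only [Finset.mem_range] at hi
      rw [W1_eq_zero H hconn (hadm.2.2.1 i (by omega)) (hadm.2.2.1 (i+1) (by omega)), h0]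
  rw [Wh, hset, csInf_singleton]

lemma hLLY_eq_zero (hconn : H.Connected) {h : ℝ → ℝ} (h0 : h 0 = 0) {u v : V} (hadj : H.Adj u v) :
    hLLY H h u v = 0 := by
  have hfun : (fun α => ORic H h α u v / (1 - α)) = fun α => (1 - α)⁻¹ := by
    funext α
    rw [ORic, Wh_dirac_eq_zero H hconn h0 hadj, div_zero, sub_zero, one_div]
  rw [hLLY, hfun, Filter.liminf_eq]
  have hT : Filter.Tendsto (fun α : ℝ => (1 - α)⁻¹) (nhdsWithin 1 (Set.Iio 1)) Filter.atTop := by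
    apply tendsto_inv_nhdsGT_zero.comp
    rw [tendsto_nhdsWithin_iff]
    constructor
    · have hT0 : Filter.Tendsto (fun α : ℝ => 1 - α) (nhds 1) (nhds 0) := by
        have hcont : Continuous (fun α : ℝ => 1 - α) := by continuity
        simpa using hcont.tendsto 1
      exact hT0.mono_left nhdsWithin_le_nhds
    · filter_upwards [eventually_mem_nhdsWithin] with α hα
      simp only [Set.mem_Iio] at hα
      simp [Set.mem_Ioi]
      linarith
  have huniv : {a : ℝ | ∀ᶠ α in nhdsWithin 1 (Set.Iio 1), a ≤ (1 - α)⁻¹} = Set.univ :=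
    Set.eq_univ_of_forall (fun a => hT.eventually_ge_atTop a)
  rw [huniv, csSup_of_not_bddAbove (not_bddAbove_univ), Real.sSup_empty]

end InfiniteV


section FiniteV
variable [Fintype V]

lemma sum_isProb {μ : V → ℝ} (hμ : IsProb μ) : ∑ v, μ v = 1 := by
  rw [← tsum_fintype (L := .unconditional _)]; exact hμ.2.2

lemma sum_mul_dirac (f : V → ℝ) (y : V) : ∑ v, f v * dirac y v = f y := by
  simp [dirac, mul_ite]

lemma expect_le_cost {μ ν : V → ℝ} {π : V → V → ℝ} (hπ : IsCoupling π μ ν) (f : V → ℝ)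
    (hf : ∀ u v, f v - f u ≤ (H.dist u v : ℝ)) :
    (∑ v, f v * ν v) - (∑ u, f u * μ u) ≤ ∑' p : V × V, (H.dist p.1 p.2 : ℝ) * π p.1 p.2 := by
  rw [tsum_fintype]
  have h1 : ∑ u, f u * μ u = ∑ p : V × V, f p.1 * π p.1 p.2 := by
    rw [Fintype.sum_prod_type]
    refine Finset.sum_congr rfl fun u _ => ?_
    rw [← (hπ.2.1 u), tsum_fintype, Finset.mul_sum]
  have h2 : ∑ v, f v * ν v = ∑ p : V × V, f p.2 * π p.1 p.2 := by
    rw [Fintype.sum_prod_type_right]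
    refine Finset.sum_congr rfl fun v _ => ?_
    rw [← (hπ.2.2 v), tsum_fintype, Finset.mul_sum]
  rw [h1, h2, ← Finset.sum_sub_distrib]
  refine Finset.sum_le_sum fun p _ => ?_
  rw [← sub_mul]
  exact mul_le_mul_of_nonneg_right (hf p.1 p.2) (hπ.1 p.1 p.2)

lemma prod_isCoupling {μ ν : V → ℝ} (hμ : IsProb μ) (hν : IsProb ν) :
    IsCoupling (fun u v => μ u * ν v) μ ν := by
  refine ⟨fun u v => mul_nonneg (hμ.1 u) (hν.1 v), fun u => ?_, fun v => ?_⟩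
  · rw [tsum_fintype, ← Finset.mul_sum, sum_isProb hν, mul_one]
  · rw [tsum_fintype]
    have : ∀ u : V, μ u * ν v = ν v * μ u := fun u => mul_comm _ _
    rw [Finset.sum_congr rfl (fun u _ => this u), ← Finset.mul_sum, sum_isProb hμ, mul_one]

lemma W1_set_nonneg {μ ν : V → ℝ} :
    ∀ c ∈ {c | ∃ π, IsCoupling π μ ν ∧
      c = ∑' p : V × V, (H.dist p.1 p.2 : ℝ) * π p.1 p.2}, (0:ℝ) ≤ c := by
  rintro c ⟨π, hπ, rfl⟩
  exact tsum_nonneg fun p => mul_nonneg (by positivity) (hπ.1 _ _)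

lemma W1_nonneg {μ ν : V → ℝ} (hμ : IsProb μ) (hν : IsProb ν) : 0 ≤ W1 H μ ν :=
  le_csInf ⟨_, ⟨_, prod_isCoupling hμ hν, rfl⟩⟩ (W1_set_nonneg H)

lemma le_W1 {μ ν : V → ℝ} (hμ : IsProb μ) (hν : IsProb ν) (f : V → ℝ)
    (hf : ∀ u v, f v - f u ≤ (H.dist u v : ℝ)) :
    (∑ v, f v * ν v) - (∑ u, f u * μ u) ≤ W1 H μ ν := by
  refine le_csInf ⟨_, ⟨_, prod_isCoupling hμ hν, rfl⟩⟩ ?_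
  rintro c ⟨π, hπ, rfl⟩
  exact expect_le_cost H hπ f hf

lemma W1_le {μ ν : V → ℝ} {π : V → V → ℝ} (hπ : IsCoupling π μ ν) :
    W1 H μ ν ≤ ∑' p : V × V, (H.dist p.1 p.2 : ℝ) * π p.1 p.2 :=
  csInf_le ⟨0, W1_set_nonneg H⟩ ⟨π, hπ, rfl⟩

lemma W1_dirac (hconn : H.Connected) (x y : V) :
    W1 H (dirac x) (dirac y) = (H.dist x y : ℝ) := by
  refine le_antisymm ?_ ?_
  · refine le_trans (W1_le H (prod_isCoupling (isProb_dirac x) (isProb_dirac y))) ?_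
    rw [tsum_fintype]
    rw [Finset.sum_eq_single (⟨x, y⟩ : V × V)]
    · simp [dirac]
    · rintro ⟨u, v⟩ - hne
      have : ¬(u = x ∧ v = y) := fun hc => hne (by simp [hc.1, hc.2])
      rcases not_and_or.mp this with hu | hv
      · simp [dirac, hu]
      · simp [dirac, hv]
    · intro hc
      exact absurd (Finset.mem_univ _) hc
  · have := le_W1 H (isProb_dirac x) (isProb_dirac y) (fun v => (H.dist x v : ℝ))
      (fun u v => by
        have := dist_triangle H hconn x u v
        have hcast : (H.dist x v : ℝ) ≤ (H.dist x u : ℝ) + (H.dist u v : ℝ) := by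
          exact_mod_cast this
        linarith)
    rw [sum_mul_dirac, sum_mul_dirac, dist_self] at this
    simpa using this

lemma W1_le_one_of_edge (hconn : H.Connected) {μ ν : V → ℝ} {e : Set V}
    (hμ : IsProb μ) (hν : IsProb ν) (he : e ∈ H.E)
    (hsupp : Function.support (fun v => ν v - μ v) ⊆ e) : W1 H μ ν ≤ 1 := by
  set ρ : V → ℝ := fun v => min (μ v) (ν v) with hρ
  set p : V → ℝ := fun v => μ v - ρ v with hp
  set q : V → ℝ := fun v => ν v - ρ v with hq
  set s : ℝ := ∑ v, p v with hs
  have hρnn : ∀ v, 0 ≤ ρ v := fun v => le_min (hμ.1 v) (hν.1 v)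
  have hpnn : ∀ v, 0 ≤ p v := fun v => sub_nonneg.mpr (min_le_left _ _)
  have hqnn : ∀ v, 0 ≤ q v := fun v => sub_nonneg.mpr (min_le_right _ _)
  have hsq : ∑ v, q v = s := by
    rw [hs]
    simp only [hp, hq, Finset.sum_sub_distrib, sum_isProb hμ, sum_isProb hν]
  have hsnn : 0 ≤ s := Finset.sum_nonneg fun v _ => hpnn v
  have hs1 : s ≤ 1 := by
    rw [hs, ← sum_isProb hμ]
    exact Finset.sum_le_sum fun v _ => by
      have := hρnn v
      simp only [hp]
      linarith
  have hpe : ∀ v, p v ≠ 0 → v ∈ e := by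
    intro v hv
    apply hsupp
    simp only [Function.mem_support]
    intro hc
    apply hv
    simp only [hp, hρ]
    rw [show ν v = μ v by linarith]
    simp
  have hqe : ∀ v, q v ≠ 0 → v ∈ e := by
    intro v hv
    apply hsupp
    simp only [Function.mem_support]
    intro hc
    apply hv
    simp only [hq, hρ]
    rw [show ν v = μ v by linarith]
    simp
  by_cases hs0 : s = 0
  · -- then μ = ν; use diagonal coupling
    have hpz : ∀ v, p v = 0 := by
      intro v
      have := (Finset.sum_eq_zero_iff_of_nonneg (fun v _ => hpnn v)).mp (hs ▸ hs0)
      exact this v (Finset.mem_univ v)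
    have hqz : ∀ v, q v = 0 := by
      intro v
      have h0 : ∑ v, q v = 0 := by rw [hsq, hs0]
      exact (Finset.sum_eq_zero_iff_of_nonneg (fun v _ => hqnn v)).mp h0 v (Finset.mem_univ v)
    have hμν : ∀ v, μ v = ν v := by
      intro v
      have h1 := hpz v
      have h2 := hqz v
      simp only [hp, hq] at h1 h2
      linarith
    set π : V → V → ℝ := fun u v => if u = v then μ u else 0 with hπ
    have hcoup : IsCoupling π μ ν := by
      refine ⟨fun u v => ?_, fun u => ?_, fun v => ?_⟩
      · by_cases h : u = v
        · simp only [hπ, if_pos h]; exact hμ.1 u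
        · simp [hπ, h]
      · rw [tsum_fintype, Finset.sum_eq_single u] <;> simp [hπ]
        intro v hv; simp [Ne.symm hv]
      · rw [tsum_fintype, Finset.sum_eq_single v] <;> simp [hπ, hμν v]
        intro u hu hc; exact absurd hc hu
    refine le_trans (W1_le H hcoup) ?_
    rw [tsum_fintype]
    have : ∀ pr : V × V, (H.dist pr.1 pr.2 : ℝ) * π pr.1 pr.2 = 0 := by
      rintro ⟨u, v⟩
      by_cases h : u = v
      · subst h; simp [dist_self H u]
      · simp [hπ, h]
    rw [Finset.sum_congr rfl (fun pr _ => this pr), Finset.sum_const_zero]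
    norm_num
  · have hspos : 0 < s := lt_of_le_of_ne hsnn (Ne.symm hs0)
    set π : V → V → ℝ := fun u v => (if u = v then ρ u else 0) + p u * q v / s with hπ
    have hcoup : IsCoupling π μ ν := by
      refine ⟨fun u v => ?_, fun u => ?_, fun v => ?_⟩
      · have hnn : 0 ≤ p u * q v / s := div_nonneg (mul_nonneg (hpnn u) (hqnn v)) hsnn
        by_cases h : u = v
        · simp only [hπ, if_pos h]
          exact add_nonneg (hρnn u) hnn
        · simp only [hπ, if_neg h, zero_add]
          exact hnn
      · rw [tsum_fintype]
        simp only [hπ, Finset.sum_add_distrib]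
        rw [Finset.sum_eq_single u (fun v _ hv => if_neg (Ne.symm hv)) (fun hc => absurd (Finset.mem_univ _) hc)]
        rw [if_pos rfl]
        have : ∑ v, p u * q v / s = p u * (∑ v, q v) / s := by
          rw [Finset.mul_sum, Finset.sum_div]
        rw [this, hsq, mul_div_assoc, div_self hs0, mul_one]
        simp [hp]
      · rw [tsum_fintype]
        simp only [hπ, Finset.sum_add_distrib]
        rw [Finset.sum_eq_single v (fun u _ hu => if_neg hu) (fun hc => absurd (Finset.mem_univ _) hc)]
        rw [if_pos rfl]
        have : ∑ u, p u * q v / s = (∑ u, p u) * q v / s := by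
          rw [Finset.sum_mul, Finset.sum_div]
        rw [this, ← hs, mul_comm, mul_div_assoc, div_self hs0, mul_one]
        simp [hq]
    refine le_trans (W1_le H hcoup) ?_
    rw [tsum_fintype]
    have hsplit : ∀ pr : V × V, (H.dist pr.1 pr.2 : ℝ) * π pr.1 pr.2 ≤ p pr.1 * q pr.2 / s := by
      rintro ⟨u, v⟩
      by_cases h : u = v
      · subst h
        simp only [hπ, if_pos rfl, dist_self H u, Nat.cast_zero, zero_mul]
        exact div_nonneg (mul_nonneg (hpnn u) (hqnn u)) hsnn
      · simp only [hπ, if_neg h]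
        rw [zero_add]
        by_cases hz : p u * q v = 0
        · rw [hz]; simp
        · have hpu : p u ≠ 0 := fun hc => hz (by rw [hc, zero_mul])
          have hqv : q v ≠ 0 := fun hc => hz (by rw [hc, mul_zero])
          have hd : H.dist u v ≤ 1 := dist_le_one_of_mem H he (hpe u hpu) (hqe v hqv)
          have : (H.dist u v : ℝ) ≤ 1 := by exact_mod_cast hd
          nlinarith [hpnn u, hqnn v, mul_nonneg (hpnn u) (hqnn v), hspos, div_nonneg (mul_nonneg (hpnn u) (hqnn v)) hsnn]
    refine le_trans (Finset.sum_le_sum fun pr _ => hsplit pr) ?_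
    rw [Fintype.sum_prod_type]
    have : ∀ u : V, ∑ v, p u * q v / s = p u * s / s := by
      intro u
      rw [← hsq, Finset.mul_sum, Finset.sum_div]
    rw [Finset.sum_congr rfl (fun u _ => this u)]
    have : ∑ u, p u * s / s = s * s / s := by
      rw [← Finset.sum_div, ← Finset.sum_mul, ← hs]
    rw [this, mul_div_assoc, div_self hs0, mul_one]
    exact hs1

end FiniteV


section FiniteV2
variable [Fintype V]

lemma adm_W1_mem (hconn : H.Connected) {μ ν : V → ℝ} {I : ℕ} {ξ : ℕ → V → ℝ}
    (hadm : WhAdmissible H μ ν I ξ) {i : ℕ} (hi : i < I) :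
    W1 H (ξ i) (ξ (i + 1)) ∈ Set.Icc (0:ℝ) 1 := by
  obtain ⟨e, he, hsupp⟩ := hadm.2.2.2 i hi
  have h1 := hadm.2.2.1 i (by omega)
  have h2 := hadm.2.2.1 (i+1) (by omega)
  exact ⟨W1_nonneg H h1 h2, W1_le_one_of_edge H hconn h1 h2 he hsupp⟩

lemma Wh_set_nonneg (hconn : H.Connected) {h : ℝ → ℝ} (hnn : ∀ t ∈ Set.Icc (0:ℝ) 1, 0 ≤ h t)
    {μ ν : V → ℝ} : ∀ c ∈ {c | ∃ I ξ, WhAdmissible H μ ν I ξ ∧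
      c = ∑ i ∈ Finset.range I, h (W1 H (ξ i) (ξ (i + 1)))}, (0:ℝ) ≤ c := by
  rintro c ⟨I, ξ, hadm, rfl⟩
  refine Finset.sum_nonneg fun i hi => ?_
  exact hnn _ (adm_W1_mem H hconn hadm (Finset.mem_range.mp hi))

lemma adm_move (x0 : V) {a b : V} {L : ℕ} {f : ℕ → V} (h0 : f 0 = a) (hL : f L = b)
    (hstep : ∀ i < L, ∃ e ∈ H.E, f i ∈ e ∧ f (i + 1) ∈ e)
    {μ : V → ℝ} (hμ : IsProb μ) :
    WhAdmissible H μ (fun w => μ w - μ a * dirac a w + μ a * dirac b w) L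
      (fun t w => μ w - μ a * dirac a w + μ a * dirac (f (min t L)) w) := by
  have hca : 0 ≤ μ a := hμ.1 a
  have hprob : ∀ t, IsProb (fun w => μ w - μ a * dirac a w + μ a * dirac (f (min t L)) w) := by
    intro t
    have hbody : ∀ w, 0 ≤ μ w - μ a * dirac a w + μ a * dirac (f (min t L)) w := by
      intro w
      by_cases hw : w = a
      · have h1 : μ w - μ a * dirac a w = 0 := by rw [hw]; simp [dirac]
        rw [h1, zero_add]
        exact mul_nonneg hca (by by_cases h : w = f (min t L) <;> simp [dirac, h])
      · have h1 : μ w - μ a * dirac a w = μ w := by simp [dirac, hw]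
        rw [h1]
        exact add_nonneg (hμ.1 w) (mul_nonneg hca (by by_cases h : w = f (min t L) <;> simp [dirac, h]))
    refine ⟨hbody, Set.toFinite _, ?_⟩
    rw [tsum_fintype]
    show ∑ w, (μ w - μ a * dirac a w + μ a * dirac (f (min t L)) w) = 1
    simp only [Finset.sum_add_distrib, Finset.sum_sub_distrib, ← Finset.mul_sum]
    have hd : ∀ z : V, ∑ w, dirac z w = 1 := by
      intro z
      rw [← tsum_fintype (L := .unconditional _)]
      exact (isProb_dirac z).2.2
    rw [sum_isProb hμ, hd, hd]
    ring
  refine ⟨?_, ?_, fun t _ => hprob t, fun t ht => ?_⟩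
  · funext w
    show μ w - μ a * dirac a w + μ a * dirac (f (min 0 L)) w = μ w
    rw [show min 0 L = 0 by omega, h0]
    ring
  · funext w
    show μ w - μ a * dirac a w + μ a * dirac (f (min L L)) w
      = μ w - μ a * dirac a w + μ a * dirac b w
    rw [min_self, hL]
  · obtain ⟨e, he, h1, h2⟩ := hstep t ht
    refine ⟨e, he, fun w hw => ?_⟩
    simp only [Function.mem_support] at hw
    have heq : (fun w => μ w - μ a * dirac a w + μ a * dirac (f (min (t+1) L)) w) w
        - (fun w => μ w - μ a * dirac a w + μ a * dirac (f (min t L)) w) w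
        = μ a * (dirac (f (t+1)) w - dirac (f t) w) := by
      rw [show min (t+1) L = t + 1 by omega, show min t L = t by omega]
      ring
    rw [heq] at hw
    have hw2 : dirac (f (t+1)) w - dirac (f t) w ≠ 0 := by
      intro hc
      rw [hc, mul_zero] at hw
      exact hw rfl
    by_cases hwa : w = f t
    · exact hwa ▸ h1
    · by_cases hwb : w = f (t+1)
      · exact hwb ▸ h2
      · exact absurd (by simp [dirac, hwa, hwb]) hw2

lemma adm_trans {μ ρ ν : V → ℝ} {I1 I2 : ℕ} {ξ1 ξ2 : ℕ → V → ℝ}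
    (h1 : WhAdmissible H μ ρ I1 ξ1) (h2 : WhAdmissible H ρ ν I2 ξ2) :
    WhAdmissible H μ ν (I1 + I2) (fun i => if i ≤ I1 then ξ1 i else ξ2 (i - I1)) ∧
    ∀ g : (V → ℝ) → (V → ℝ) → ℝ,
      ∑ i ∈ Finset.range (I1 + I2),
        g ((fun i => if i ≤ I1 then ξ1 i else ξ2 (i - I1)) i)
          ((fun i => if i ≤ I1 then ξ1 i else ξ2 (i - I1)) (i+1))
      = (∑ i ∈ Finset.range I1, g (ξ1 i) (ξ1 (i+1)))
        + ∑ i ∈ Finset.range I2, g (ξ2 i) (ξ2 (i+1)) := by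
  set G : ℕ → V → ℝ := fun i => if i ≤ I1 then ξ1 i else ξ2 (i - I1) with hG
  have hg1 : ∀ i, i ≤ I1 → G i = ξ1 i := fun i hi => by simp [hG, hi]
  have hg2 : ∀ i, G (I1 + i) = ξ2 i := by
    intro i
    by_cases h : i = 0
    · subst h
      have hx : G (I1 + 0) = ξ1 I1 := by
        rw [show I1 + 0 = I1 by omega]
        exact hg1 I1 (le_refl I1)
      rw [hx, h1.2.1, ← h2.1]
    · have hn : ¬ (I1 + i ≤ I1) := by omega
      simp only [hG]
      rw [if_neg hn, show I1 + i - I1 = i by omega]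
  constructor
  · refine ⟨by rw [hg1 0 (by omega), h1.1], ?_, ?_, ?_⟩
    · rw [hg2 I2, h2.2.1]
    · intro i hi
      by_cases h : i ≤ I1
      · rw [hg1 i h]; exact h1.2.2.1 i h
      · rw [show i = I1 + (i - I1) by omega, hg2]
        exact h2.2.2.1 (i - I1) (by omega)
    · intro i hi
      by_cases h : i < I1
      · rw [hg1 i (by omega), hg1 (i+1) (by omega)]
        exact h1.2.2.2 i h
      · rw [show i = I1 + (i - I1) by omega, hg2,
          show I1 + (i - I1) + 1 = I1 + (i - I1 + 1) by omega, hg2]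
        exact h2.2.2.2 (i - I1) (by omega)
  · intro g
    rw [Finset.sum_range_add]
    congr 1
    · refine Finset.sum_congr rfl fun i hi => ?_
      have hi' := Finset.mem_range.mp hi
      rw [hg1 i (by omega), hg1 (i+1) (by omega)]
    · refine Finset.sum_congr rfl fun i hi => ?_
      rw [hg2 i, show I1 + i + 1 = I1 + (i + 1) by omega, hg2]

lemma adm_symm {μ ν : V → ℝ} {I : ℕ} {ξ : ℕ → V → ℝ}
    (hadm : WhAdmissible H μ ν I ξ) :
    WhAdmissible H ν μ I (fun i => ξ (I - i)) := by
  refine ⟨by simp [hadm.2.1], by simp [hadm.1], fun i hi => hadm.2.2.1 _ (by omega), ?_⟩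
  intro i hi
  obtain ⟨e, he, hsupp⟩ := hadm.2.2.2 (I - i - 1) (by omega)
  refine ⟨e, he, fun w hw => ?_⟩
  apply hsupp
  simp only [Function.mem_support] at hw ⊢
  rw [show I - i - 1 + 1 = I - i by omega]
  intro hc
  apply hw
  rw [show I - (i+1) = I - i - 1 by omega]
  linarith

lemma isProb_nonempty {μ : V → ℝ} (hμ : IsProb μ) : Nonempty V := by
  by_contra hc
  have : IsEmpty V := not_nonempty_iff.mp hc
  have := hμ.2.2
  rw [tsum_empty] at this
  norm_num at this

lemma adm_to_dirac (hconn : H.Connected) (x0 : V) :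
    ∀ (n : ℕ) (μ : V → ℝ), IsProb μ →
      (Finset.univ.filter (fun v => μ v ≠ 0 ∧ v ≠ x0)).card ≤ n →
      ∃ I ξ, WhAdmissible H μ (dirac x0) I ξ := by
  intro n
  induction n with
  | zero =>
    intro μ hμ hcard
    have hempty : Finset.univ.filter (fun v => μ v ≠ 0 ∧ v ≠ x0) = ∅ :=
      Finset.card_eq_zero.mp (Nat.le_zero.mp hcard)
    have hzero : ∀ v, v ≠ x0 → μ v = 0 := by
      intro v hv
      by_contra hne
      have : v ∈ Finset.univ.filter (fun v => μ v ≠ 0 ∧ v ≠ x0) :=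
        Finset.mem_filter.mpr ⟨Finset.mem_univ v, hne, hv⟩
      rw [hempty] at this
      exact absurd this (Finset.notMem_empty v)
    have hone : μ x0 = 1 := by
      have := sum_isProb hμ
      rwa [Finset.sum_eq_single x0 (fun v _ hv => hzero v hv)
        (fun hc => absurd (Finset.mem_univ _) hc)] at this
    have heq : μ = dirac x0 := by
      funext v
      by_cases hv : v = x0
      · subst hv; simp [dirac, hone]
      · simp [dirac, hv, hzero v hv]
    exact ⟨0, fun _ => μ, ⟨rfl, by rw [heq], fun i _ => hμ, by omega⟩⟩
  | succ n ih =>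
    intro μ hμ hcard
    by_cases hempty : Finset.univ.filter (fun v => μ v ≠ 0 ∧ v ≠ x0) = ∅
    · exact ih μ hμ (by rw [hempty]; simp)
    · obtain ⟨a, ha⟩ := Finset.nonempty_iff_ne_empty.mpr hempty
      obtain ⟨-, hane, hax0⟩ := Finset.mem_filter.mp ha
      obtain ⟨F, hF0, hFL, hFstep⟩ := isPath_dist H hconn a x0
      have hmove := adm_move H x0 hF0 hFL hFstep hμ
      set μ' : V → ℝ := fun w => μ w - μ a * dirac a w + μ a * dirac x0 w with hμ'
      have hμ'prob : IsProb μ' := by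
        have hpr := hmove.2.2.1 (H.dist a x0) (le_refl _)
        rwa [hmove.2.1] at hpr
      have hcard' : (Finset.univ.filter (fun v => μ' v ≠ 0 ∧ v ≠ x0)).card ≤ n := by
        have hsub : Finset.univ.filter (fun v => μ' v ≠ 0 ∧ v ≠ x0) ⊆
            (Finset.univ.filter (fun v => μ v ≠ 0 ∧ v ≠ x0)).erase a := by
          intro v hv
          obtain ⟨-, hv1, hv2⟩ := Finset.mem_filter.mp hv
          have hva : v ≠ a := by
            intro hc
            subst hc
            apply hv1
            simp [hμ', dirac, hv2]
          refine Finset.mem_erase.mpr ⟨hva, Finset.mem_filter.mpr ⟨Finset.mem_univ v, ?_, hv2⟩⟩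
          intro hc
          apply hv1
          simp [hμ', dirac, hva, hv2, hc]
        calc (Finset.univ.filter (fun v => μ' v ≠ 0 ∧ v ≠ x0)).card
            ≤ ((Finset.univ.filter (fun v => μ v ≠ 0 ∧ v ≠ x0)).erase a).card :=
              Finset.card_le_card hsub
          _ ≤ n := by
              rw [Finset.card_erase_of_mem ha]
              omega
      obtain ⟨I2, ξ2, hadm2⟩ := ih μ' hμ'prob hcard'
      have hend : (fun w => μ w - μ a * dirac a w + μ a * dirac x0 w) = μ' := rfl
      exact ⟨_, _, (adm_trans H (hend ▸ hmove) hadm2).1⟩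

lemma adm_exists (hconn : H.Connected) {μ ν : V → ℝ} (hμ : IsProb μ) (hν : IsProb ν) :
    ∃ I ξ, WhAdmissible H μ ν I ξ := by
  have : Nonempty V := isProb_nonempty hμ
  obtain ⟨x0⟩ := this
  obtain ⟨I1, ξ1, h1⟩ := adm_to_dirac H hconn x0 _ μ hμ (le_refl _)
  obtain ⟨I2, ξ2, h2⟩ := adm_to_dirac H hconn x0 _ ν hν (le_refl _)
  exact ⟨_, _, (adm_trans H h1 (adm_symm H h2)).1⟩

lemma Wh_nonneg (hconn : H.Connected) {h : ℝ → ℝ} (hnn : ∀ t ∈ Set.Icc (0:ℝ) 1, 0 ≤ h t)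
    {μ ν : V → ℝ} (hμ : IsProb μ) (hν : IsProb ν) : 0 ≤ Wh H h μ ν := by
  obtain ⟨I, ξ, hadm⟩ := adm_exists H hconn hμ hν
  exact le_csInf ⟨_, I, ξ, hadm, rfl⟩ (Wh_set_nonneg H hconn hnn)

lemma Wh_triangle (hconn : H.Connected) {h : ℝ → ℝ} (hnn : ∀ t ∈ Set.Icc (0:ℝ) 1, 0 ≤ h t)
    {μ ρ ν : V → ℝ} (hμ : IsProb μ) (hρ : IsProb ρ) (hν : IsProb ν) :
    Wh H h μ ν ≤ Wh H h μ ρ + Wh H h ρ ν := by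
  obtain ⟨Ia, ξa, hadma⟩ := adm_exists H hconn hμ hρ
  obtain ⟨Ib, ξb, hadmb⟩ := adm_exists H hconn hρ hν
  have key : ∀ c1 ∈ {c | ∃ I ξ, WhAdmissible H μ ρ I ξ ∧
      c = ∑ i ∈ Finset.range I, h (W1 H (ξ i) (ξ (i + 1)))},
      ∀ c2 ∈ {c | ∃ I ξ, WhAdmissible H ρ ν I ξ ∧
      c = ∑ i ∈ Finset.range I, h (W1 H (ξ i) (ξ (i + 1)))},
      Wh H h μ ν ≤ c1 + c2 := by
    rintro c1 ⟨I1, ξ1, hadm1, rfl⟩ c2 ⟨I2, ξ2, hadm2, rfl⟩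
    obtain ⟨hadm, hsum⟩ := adm_trans H hadm1 hadm2
    refine csInf_le ⟨0, Wh_set_nonneg H hconn hnn⟩ ⟨I1 + I2, _, hadm, ?_⟩
    exact (hsum (fun x y => h (W1 H x y))).symm
  have step1 : ∀ c2 ∈ {c | ∃ I ξ, WhAdmissible H ρ ν I ξ ∧
      c = ∑ i ∈ Finset.range I, h (W1 H (ξ i) (ξ (i + 1)))},
      Wh H h μ ν - c2 ≤ Wh H h μ ρ := by
    intro c2 hc2
    refine le_csInf ⟨_, Ia, ξa, hadma, rfl⟩ fun c1 hc1 => ?_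
    linarith [key c1 hc1 c2 hc2]
  have step2 : Wh H h μ ν - Wh H h μ ρ ≤ Wh H h ρ ν := by
    refine le_csInf ⟨_, Ib, ξb, hadmb, rfl⟩ fun c2 hc2 => ?_
    linarith [step1 c2 hc2]
  linarith

end FiniteV2


lemma subadd_two {h : ℝ → ℝ} {D0 D1 : ℝ} (hc : CostFn h D0 D1) {a b : ℝ}
    (ha : 0 ≤ a) (hb : 0 ≤ b) (hab : a + b ≤ 1) : h (a + b) ≤ h a + h b := by
  rcases eq_or_lt_of_le ha with ha0 | hapos
  · rw [← ha0, zero_add, hc.zero, zero_add]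
  rcases eq_or_lt_of_le hb with hb0 | hbpos
  · rw [← hb0, add_zero, hc.zero, add_zero]
  have htpos : 0 < a + b := by linarith
  have hmem0 : (0:ℝ) ∈ Set.Icc (0:ℝ) 1 := by norm_num
  have hmemt : a + b ∈ Set.Icc (0:ℝ) 1 := ⟨by linarith, hab⟩
  have key : ∀ u v : ℝ, 0 < u → 0 < v → u + v = a + b → (u/(a+b)) * h (a+b) ≤ h u := by
    intro u v hu hv huv
    have h1 := hc.concave.2 hmem0 hmemt (le_of_lt (div_pos hv htpos))
      (le_of_lt (div_pos hu htpos)) (by field_simp; linarith)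
    simp only [smul_eq_mul, mul_zero, zero_add, hc.zero] at h1
    rwa [div_mul_cancel₀ _ (ne_of_gt htpos)] at h1
  have k1 := key a b hapos hbpos rfl
  have k2 := key b a hbpos hapos (by ring)
  have hsum : a/(a+b) * h (a+b) + b/(a+b) * h (a+b) = h (a+b) := by
    rw [← add_mul]
    field_simp
  linarith

lemma subadd_sum {h : ℝ → ℝ} {D0 D1 : ℝ} (hc : CostFn h D0 D1) {ι : Type*} (T : Finset ι)
    (w : ι → ℝ) (hw : ∀ i ∈ T, w i ∈ Set.Icc (0:ℝ) 1) :
    ∀ c : ℝ, c ∈ Set.Icc (0:ℝ) 1 → c ≤ ∑ i ∈ T, w i → h c ≤ ∑ i ∈ T, h (w i) := by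
  classical
  induction T using Finset.induction_on with
  | empty =>
    intro c hc01 hle
    simp only [Finset.sum_empty] at hle ⊢
    rw [le_antisymm hle hc01.1, hc.zero]
  | @insert a T ha ih =>
    intro c hc01 hle
    have hwa := hw a (Finset.mem_insert_self a T)
    have hwT := fun i hi => hw i (Finset.mem_insert_of_mem hi)
    rw [Finset.sum_insert ha] at hle ⊢
    have hTnn : 0 ≤ ∑ i ∈ T, h (w i) :=
      Finset.sum_nonneg fun i hi => hc.nonneg _ (hwT i hi)
    by_cases hca : c ≤ w a
    · have h1 : h c ≤ h (w a) := hc.mono hc01 hwa hca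
      linarith
    · push_neg at hca
      have hc'01 : c - w a ∈ Set.Icc (0:ℝ) 1 := ⟨by linarith, by linarith [hwa.1, hc01.2]⟩
      have hle' : c - w a ≤ ∑ i ∈ T, w i := by linarith
      have hIH := ih hwT (c - w a) hc'01 hle'
      have h2 : h (w a + (c - w a)) ≤ h (w a) + h (c - w a) :=
        subadd_two hc hwa.1 hc'01.1 (by linarith [hc01.2])
      rw [show w a + (c - w a) = c by ring] at h2
      linarith

section FiniteV3
variable [Fintype V]

lemma cut_lower_bound (hconn : H.Connected) {h : ℝ → ℝ} {D0 D1 : ℝ} (hc : CostFn h D0 D1)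
    (x : V) {μ ν : V → ℝ} (hμ : IsProb μ) (hν : IsProb ν) (K : Finset ℕ) (c : ℕ → ℝ)
    (hc01 : ∀ k ∈ K, c k ∈ Set.Icc (0:ℝ) 1)
    (hcle : ∀ k ∈ K, c k ≤ (∑ v, if k ≤ H.dist x v then ν v else 0)
      - (∑ v, if k ≤ H.dist x v then μ v else 0)) :
    ∑ k ∈ K, h (c k) ≤ Wh H h μ ν := by
  have hnn : ∀ t ∈ Set.Icc (0:ℝ) 1, 0 ≤ h t := hc.nonneg
  obtain ⟨I0, ξ0, hadm0⟩ := adm_exists H hconn hμ hν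
  refine le_csInf ⟨_, I0, ξ0, hadm0, rfl⟩ ?_
  rintro cost ⟨I, ξ, hadm, rfl⟩
  have hwmem : ∀ i < I, W1 H (ξ i) (ξ (i+1)) ∈ Set.Icc (0:ℝ) 1 :=
    fun i hi => adm_W1_mem H hconn hadm hi
  have hvanish : ∀ i, ∀ v : V, v ∉ Finset.univ.filter (fun v => ξ (i+1) v ≠ ξ i v) →
      ξ (i+1) v = ξ i v := by
    intro i v hv
    by_contra hne
    exact hv (Finset.mem_filter.mpr ⟨Finset.mem_univ v, hne⟩)
  have hdiff : ∀ i k, (∑ v, if k ≤ H.dist x v then ξ (i+1) v else 0)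
      - (∑ v, if k ≤ H.dist x v then ξ i v else 0)
      = ∑ v ∈ Finset.univ.filter (fun v => ξ (i+1) v ≠ ξ i v),
          (if k ≤ H.dist x v then ξ (i+1) v - ξ i v else 0) := by
    intro i k
    have hpt : ∀ v : V, (if k ≤ H.dist x v then ξ (i+1) v else 0)
        - (if k ≤ H.dist x v then ξ i v else 0)
        = (if k ≤ H.dist x v then ξ (i+1) v - ξ i v else 0) := by
      intro v; by_cases hk : k ≤ H.dist x v <;> simp [hk]
    rw [← Finset.sum_sub_distrib, Finset.sum_congr rfl (fun v _ => hpt v)]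
    exact (Finset.sum_subset (Finset.subset_univ _) (fun v _ hv => by
      rw [hvanish i v hv]; simp)).symm
  have hstep : ∀ i, ∃ j : ℕ, i < I →
      (∀ k, k ≠ j + 1 → (∑ v, if k ≤ H.dist x v then ξ (i+1) v else 0)
        = (∑ v, if k ≤ H.dist x v then ξ i v else 0))
      ∧ (∑ v, if j+1 ≤ H.dist x v then ξ (i+1) v else 0)
        - (∑ v, if j+1 ≤ H.dist x v then ξ i v else 0) ≤ W1 H (ξ i) (ξ (i+1)) := by
    intro i
    by_cases hi : i < I
    swap
    · exact ⟨0, fun hcon => absurd hcon hi⟩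
    obtain ⟨e, he, hsupp⟩ := hadm.2.2.2 i hi
    have hprobi := hadm.2.2.1 i (by omega)
    have hprobi1 := hadm.2.2.1 (i+1) (by omega)
    have hSe : ∀ v ∈ Finset.univ.filter (fun v => ξ (i+1) v ≠ ξ i v), v ∈ e := by
      intro v hv
      exact hsupp (Function.mem_support.mpr (sub_ne_zero_of_ne (Finset.mem_filter.mp hv).2))
    have hsum0 : ∑ v ∈ Finset.univ.filter (fun v => ξ (i+1) v ≠ ξ i v),
        (ξ (i+1) v - ξ i v) = 0 := by
      rw [Finset.sum_subset (Finset.subset_univ _) (fun v _ hv => by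
        rw [hvanish i v hv]; simp)]
      rw [Finset.sum_sub_distrib, sum_isProb hprobi1, sum_isProb hprobi, sub_self]
    rcases Finset.eq_empty_or_nonempty (Finset.univ.filter (fun v => ξ (i+1) v ≠ ξ i v))
      with hSemp | hSne
    · refine ⟨0, fun _ => ⟨fun k _ => ?_, ?_⟩⟩
      · have hd := hdiff i k
        rw [hSemp, Finset.sum_empty] at hd
        linarith
      · have hd := hdiff i 1
        rw [hSemp, Finset.sum_empty] at hd
        rw [hd]
        exact (hwmem i hi).1
    · obtain ⟨v0, hv0S, hv0min⟩ := Finset.exists_min_image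
        (Finset.univ.filter (fun v => ξ (i+1) v ≠ ξ i v)) (fun v => H.dist x v) hSne
      refine ⟨H.dist x v0, fun _ => ?_⟩
      have hrange : ∀ v ∈ Finset.univ.filter (fun v => ξ (i+1) v ≠ ξ i v),
          H.dist x v0 ≤ H.dist x v ∧ H.dist x v ≤ H.dist x v0 + 1 := by
        intro v hv
        refine ⟨hv0min v hv, ?_⟩
        have h1 : H.dist x v ≤ H.dist x v0 + H.dist v0 v := dist_triangle H hconn x v0 v
        have h2 : H.dist v0 v ≤ 1 := dist_le_one_of_mem H he (hSe v0 hv0S) (hSe v hv)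
        omega
      constructor
      · intro k hk
        have hd := hdiff i k
        have hzero : ∑ v ∈ Finset.univ.filter (fun v => ξ (i+1) v ≠ ξ i v),
            (if k ≤ H.dist x v then ξ (i+1) v - ξ i v else 0) = 0 := by
          by_cases hkj : k ≤ H.dist x v0
          · rw [Finset.sum_congr rfl (fun v hv =>
              if_pos (le_trans hkj (hrange v hv).1))]
            exact hsum0
          · rw [Finset.sum_congr rfl (fun v hv => if_neg (by
              have := (hrange v hv).2
              omega))]
            exact Finset.sum_const_zero
        rw [hzero] at hd
        linarith
      · have hlip : ∀ u v : V, (if H.dist x v0 + 1 ≤ H.dist x v then (1:ℝ) else 0)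
            - (if H.dist x v0 + 1 ≤ H.dist x u then (1:ℝ) else 0) ≤ (H.dist u v : ℝ) := by
          intro u v
          have hcast : (0:ℝ) ≤ (H.dist u v : ℝ) := Nat.cast_nonneg _
          by_cases h1 : H.dist x v0 + 1 ≤ H.dist x v
          · by_cases h2 : H.dist x v0 + 1 ≤ H.dist x u
            · rw [if_pos h1, if_pos h2, sub_self]; exact hcast
            · rw [if_pos h1, if_neg h2, sub_zero]
              have hne : u ≠ v := fun hcon => h2 (hcon ▸ h1)
              exact_mod_cast one_le_dist H hconn hne
          · by_cases h2 : H.dist x v0 + 1 ≤ H.dist x u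
            · rw [if_neg h1, if_pos h2, zero_sub]
              linarith
            · rw [if_neg h1, if_neg h2, sub_self]; exact hcast
        have hd := le_W1 H hprobi hprobi1
          (fun v => if H.dist x v0 + 1 ≤ H.dist x v then (1:ℝ) else 0) hlip
        have hEF : ∀ ρ : V → ℝ,
            ∑ v, (if H.dist x v0 + 1 ≤ H.dist x v then (1:ℝ) else 0) * ρ v
            = ∑ v, if H.dist x v0 + 1 ≤ H.dist x v then ρ v else 0 := by
          intro ρ
          refine Finset.sum_congr rfl fun v _ => ?_
          by_cases hk : H.dist x v0 + 1 ≤ H.dist x v <;> simp [hk]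
        rw [hEF, hEF] at hd
        exact hd
  choose j hj using hstep
  have htel : ∀ k ∈ K, c k ≤ ∑ i ∈ Finset.range I,
      ((∑ v, if k ≤ H.dist x v then ξ (i+1) v else 0)
        - (∑ v, if k ≤ H.dist x v then ξ i v else 0)) := by
    intro k hk
    rw [Finset.sum_range_sub (fun i => ∑ v, if k ≤ H.dist x v then ξ i v else 0)]
    rw [hadm.1, hadm.2.1]
    exact hcle k hk
  have hperk : ∀ k ∈ K, h (c k) ≤
      ∑ i ∈ (Finset.range I).filter (fun i => j i + 1 = k), h (W1 H (ξ i) (ξ (i+1))) := by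
    intro k hk
    apply subadd_sum hc _ _ (fun i hi => hwmem i
      (Finset.mem_range.mp (Finset.mem_filter.mp hi).1)) (c k) (hc01 k hk)
    have h2 : ∑ i ∈ Finset.range I,
        ((∑ v, if k ≤ H.dist x v then ξ (i+1) v else 0)
          - (∑ v, if k ≤ H.dist x v then ξ i v else 0))
        = ∑ i ∈ (Finset.range I).filter (fun i => j i + 1 = k),
        ((∑ v, if k ≤ H.dist x v then ξ (i+1) v else 0)
          - (∑ v, if k ≤ H.dist x v then ξ i v else 0)) := by
      refine (Finset.sum_subset (Finset.filter_subset _ _) ?_).symm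
      intro i hiI hifilt
      have hiI' := Finset.mem_range.mp hiI
      have hne : k ≠ j i + 1 := by
        intro hcon
        exact hifilt (Finset.mem_filter.mpr ⟨hiI, hcon.symm⟩)
      rw [(hj i hiI').1 k hne, sub_self]
    have h3 : ∑ i ∈ (Finset.range I).filter (fun i => j i + 1 = k),
        ((∑ v, if k ≤ H.dist x v then ξ (i+1) v else 0)
          - (∑ v, if k ≤ H.dist x v then ξ i v else 0))
        ≤ ∑ i ∈ (Finset.range I).filter (fun i => j i + 1 = k), W1 H (ξ i) (ξ (i+1)) := by
      refine Finset.sum_le_sum fun i hi => ?_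
      obtain ⟨hiI, hik⟩ := Finset.mem_filter.mp hi
      have := (hj i (Finset.mem_range.mp hiI)).2
      rw [hik] at this
      exact this
    linarith [htel k hk]
  calc ∑ k ∈ K, h (c k)
      ≤ ∑ k ∈ K, ∑ i ∈ (Finset.range I).filter (fun i => j i + 1 = k),
          h (W1 H (ξ i) (ξ (i+1))) := Finset.sum_le_sum hperk
    _ = ∑ i ∈ K.biUnion (fun k => (Finset.range I).filter (fun i => j i + 1 = k)),
          h (W1 H (ξ i) (ξ (i+1))) := by
        refine (Finset.sum_biUnion ?_).symm
        intro k1 hk1 k2 hk2 hne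
        refine Finset.disjoint_left.mpr fun i hi1 hi2 => ?_
        exact hne ((Finset.mem_filter.mp hi1).2 ▸ (Finset.mem_filter.mp hi2).2)
    _ ≤ ∑ i ∈ Finset.range I, h (W1 H (ξ i) (ξ (i+1))) := by
        refine Finset.sum_le_sum_of_subset_of_nonneg
          (Finset.biUnion_subset.mpr fun k _ => Finset.filter_subset _ _) ?_
        intro i hi _
        exact hnn _ (hwmem i (Finset.mem_range.mp hi))

end FiniteV3


section FiniteV4
variable [Fintype V]

lemma degree_eq_card (x : V) :
    H.degree x = (Finset.univ.filter (fun v => H.Adj x v)).card := by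
  rw [Hypergraph'.degree,
    show {y | H.Adj x y} = ↑(Finset.univ.filter (fun v => H.Adj x v)) by ext; simp]
  exact Set.ncard_coe_finset _

lemma degree_pos {x z : V} (hadj : H.Adj x z) : 0 < H.degree x := by
  rw [degree_eq_card, Finset.card_pos]
  exact ⟨z, Finset.mem_filter.mpr ⟨Finset.mem_univ z, hadj⟩⟩

lemma exists_adj_of_one_le_dist (hconn : H.Connected) {x y : V} (h1 : 1 ≤ H.dist x y) :
    ∃ z, H.Adj x z := by
  obtain ⟨f, h0, hL, hstep⟩ := isPath_dist H hconn x y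
  have hne : f 0 ≠ f 1 := consec_ne_of_min H h0 hL hstep
    (fun m hm hp => absurd (dist_le H hp) (by omega)) h1
  obtain ⟨e, he, hu, hv⟩ := hstep 0 h1
  exact ⟨f 1, h0 ▸ hne, e, he, h0 ▸ hu, hv⟩

lemma isProb_rw {α : ℝ} (hα0 : 0 ≤ α) (hα1 : α ≤ 1) {x : V}
    (hdeg : 0 < H.degree x) : IsProb (rw H α x) := by
  have hcnn : (0:ℝ) ≤ (1 - α) / (H.degree x) :=
    div_nonneg (by linarith) (Nat.cast_nonneg _)
  refine ⟨fun v => ?_, Set.toFinite _, ?_⟩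
  · show 0 ≤ if v = x then α else if H.Adj x v then (1 - α) / (H.degree x) else 0
    by_cases h1 : v = x
    · rw [if_pos h1]; exact hα0
    · rw [if_neg h1]
      by_cases h2 : H.Adj x v
      · rw [if_pos h2]; exact hcnn
      · rw [if_neg h2]
  · rw [tsum_fintype, ← Finset.add_sum_erase Finset.univ _ (Finset.mem_univ x)]
    have h1 : rw H α x x = α := if_pos rfl
    have h2 : ∑ v ∈ Finset.univ.erase x, rw H α x v
        = ∑ v ∈ Finset.univ.erase x, (if H.Adj x v then (1-α)/(H.degree x) else 0) := by
      refine Finset.sum_congr rfl fun v hv => ?_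
      have hvx := (Finset.mem_erase.mp hv).1
      show (if v = x then α else if H.Adj x v then (1-α)/(H.degree x) else 0) = _
      rw [if_neg hvx]
    have h3 : (Finset.univ.erase x).filter (fun v => H.Adj x v)
        = Finset.univ.filter (fun v => H.Adj x v) := by
      ext v
      simp only [Finset.mem_filter, Finset.mem_erase, Finset.mem_univ, true_and, and_true]
      exact ⟨fun hp => hp.2, fun hp => ⟨Ne.symm hp.1, hp⟩⟩
    rw [h1, h2, ← Finset.sum_filter, h3, Finset.sum_const, nsmul_eq_mul, ← degree_eq_card]
    have hdne : (H.degree x : ℝ) ≠ 0 := Nat.cast_ne_zero.mpr (by omega)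
    have h4 : (H.degree x : ℝ) * ((1 - α) / (H.degree x)) = 1 - α := by
      field_simp
    rw [h4]
    ring

lemma sum_erase_rw {α : ℝ} {x : V} (hprob : IsProb (rw H α x)) :
    ∑ v ∈ Finset.univ.erase x, rw H α x v = 1 - α := by
  have h1 : rw H α x x + ∑ v ∈ Finset.univ.erase x, rw H α x v = 1 := by
    rw [Finset.add_sum_erase Finset.univ _ (Finset.mem_univ x), ← tsum_fintype (L := .unconditional _)]
    exact hprob.2.2
  have h2 : rw H α x x = α := if_pos rfl
  linarith

lemma Fk_rw_near {α : ℝ} {x : V} (hprob : IsProb (rw H α x)) {k : ℕ} (hk : 1 ≤ k) :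
    (∑ v, if k ≤ H.dist x v then rw H α x v else 0) ≤ 1 - α := by
  have hpt : ∀ v : V, (if k ≤ H.dist x v then rw H α x v else 0)
      ≤ (if v = x then 0 else rw H α x v) := by
    intro v
    by_cases hvx : v = x
    · rw [if_pos hvx, hvx, if_neg (by rw [dist_self]; omega)]
    · rw [if_neg hvx]
      by_cases hd : k ≤ H.dist x v
      · rw [if_pos hd]
      · rw [if_neg hd]; exact hprob.1 v
  refine le_trans (Finset.sum_le_sum fun v _ => hpt v) ?_
  rw [← Finset.add_sum_erase Finset.univ _ (Finset.mem_univ x), if_pos rfl, zero_add]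
  have heq : ∑ v ∈ Finset.univ.erase x, (if v = x then 0 else rw H α x v)
      = ∑ v ∈ Finset.univ.erase x, rw H α x v :=
    Finset.sum_congr rfl fun v hv => if_neg (Finset.mem_erase.mp hv).1
  rw [heq, sum_erase_rw H hprob]

lemma Fk_rw_far_zero (hconn : H.Connected) {α : ℝ} {x : V} {k : ℕ} (hk : 2 ≤ k) :
    (∑ v, if k ≤ H.dist x v then rw H α x v else 0) = 0 := by
  refine Finset.sum_eq_zero fun v _ => ?_
  by_cases hd : k ≤ H.dist x v
  · rw [if_pos hd]
    show (if v = x then α else if H.Adj x v then (1-α)/(H.degree x) else 0) = 0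
    have hvx : v ≠ x := by
      intro hcon
      rw [hcon, dist_self] at hd
      omega
    rw [if_neg hvx, if_neg]
    intro hadj
    rw [dist_eq_one_of_adj H hconn hadj] at hd
    omega
  · rw [if_neg hd]

lemma Fk_ge_center {k : ℕ} {y x : V} {ρ : V → ℝ} (hnn : ∀ v, 0 ≤ ρ v)
    (hd : k ≤ H.dist x y) :
    ρ y ≤ ∑ v, if k ≤ H.dist x v then ρ v else 0 := by
  have := Finset.single_le_sum (f := fun v => if k ≤ H.dist x v then ρ v else 0)
    (fun v _ => by
      show (0:ℝ) ≤ if k ≤ H.dist x v then ρ v else 0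
      by_cases hcnd : k ≤ H.dist x v
      · rw [if_pos hcnd]; exact hnn v
      · rw [if_neg hcnd]) (Finset.mem_univ y)
  simpa [hd] using this

lemma Fk_eq_one_far (hconn : H.Connected) {x y : V} {α : ℝ} {k : ℕ}
    (hprob : IsProb (rw H α y)) (hk : k + 1 ≤ H.dist x y) :
    (∑ v, if k ≤ H.dist x v then rw H α y v else 0) = 1 := by
  have hpt : ∀ v : V, (if k ≤ H.dist x v then rw H α y v else 0) = rw H α y v := by
    intro v
    by_cases hz : rw H α y v = 0
    · by_cases hcnd : k ≤ H.dist x v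
      · rw [if_pos hcnd]
      · rw [if_neg hcnd, hz]
    · have hd : k ≤ H.dist x v := by
        by_cases hvy : v = y
        · rw [hvy]; omega
        · have hadj : H.Adj y v := by
            by_contra hno
            apply hz
            show (if v = y then α else if H.Adj y v then (1-α)/(H.degree y) else 0) = 0
            rw [if_neg hvy, if_neg hno]
          obtain ⟨hne, e, he, hy, hv⟩ := hadj
          have h1 : H.dist x y ≤ H.dist x v + H.dist v y := dist_triangle H hconn x v y
          have h2 : H.dist v y ≤ 1 := dist_le_one_of_mem H he hv hy
          omega
      rw [if_pos hd]
  rw [Finset.sum_congr rfl (fun v _ => hpt v), ← tsum_fintype (L := .unconditional _)]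
  exact hprob.2.2

lemma Fk_dirac_zero {u x : V} {k : ℕ} (hk : 1 ≤ k) (hdx : H.dist x u = 0) :
    (∑ v, if k ≤ H.dist x v then dirac u v else 0) = 0 := by
  refine Finset.sum_eq_zero fun v _ => ?_
  by_cases hd : k ≤ H.dist x v
  · rw [if_pos hd]
    show (if v = u then (1:ℝ) else 0) = 0
    rw [if_neg]
    intro hcon
    rw [hcon, hdx] at hd
    omega
  · rw [if_neg hd]

lemma Wh_dirac_adj (hconn : H.Connected) {h : ℝ → ℝ} {D0 D1 : ℝ} (hc : CostFn h D0 D1)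
    {u v : V} (hadj : H.Adj u v) : Wh H h (dirac u) (dirac v) = h 1 := by
  refine le_antisymm ?_ ?_
  · obtain ⟨hne, e, he, hu, hv⟩ := hadj
    refine csInf_le ⟨0, Wh_set_nonneg H hconn hc.nonneg⟩
      ⟨1, _, whAdmissible_single H he (isProb_dirac u) (isProb_dirac v)
        (dirac_diff_support hu hv), ?_⟩
    rw [Finset.sum_range_one]
    norm_num
    rw [W1_dirac H hconn, dist_eq_one_of_adj H hconn ⟨hne, e, he, hu, hv⟩]
    norm_num
  · have hbound := cut_lower_bound H hconn hc u (isProb_dirac u) (isProb_dirac v)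
      {1} (fun _ => 1) (fun k _ => ⟨zero_le_one, le_refl 1⟩) ?_
    · simpa using hbound
    · intro k hk
      simp only [Finset.mem_singleton] at hk
      subst hk
      have h1 : (1:ℝ) ≤ ∑ w, if 1 ≤ H.dist u w then dirac v w else 0 := by
        have := Fk_ge_center H (ρ := dirac v) (y := v) (x := u)
          (fun w => (isProb_dirac v).1 w)
          (one_le_dist H hconn hadj.1)
        simpa [dirac] using this
      have h2 : (∑ w, if 1 ≤ H.dist u w then dirac u w else 0) = 0 :=
        Fk_dirac_zero H (le_refl 1) (dist_self H u)
      show (1:ℝ) ≤ (∑ w, if 1 ≤ H.dist u w then dirac v w else 0)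
        - (∑ w, if 1 ≤ H.dist u w then dirac u w else 0)
      rw [h2]
      linarith

end FiniteV4


lemma h1_pos {h : ℝ → ℝ} {D0 D1 : ℝ} (hc : CostFn h D0 D1) : 0 < h 1 := by
  have hev1 : ∀ᶠ t in nhdsWithin 0 (Set.Ioi 0), D0/2 < h t / t :=
    hc.d0.eventually (eventually_gt_nhds (by linarith [hc.d0_pos]))
  have hev2 : ∀ᶠ t in nhdsWithin 0 (Set.Ioi 0), t ∈ Set.Ioi (0:ℝ) :=
    eventually_mem_nhdsWithin
  have hev3 : ∀ᶠ t in nhdsWithin (0:ℝ) (Set.Ioi 0), t < 1 :=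
    eventually_nhdsWithin_of_eventually_nhds (eventually_lt_nhds one_pos)
  obtain ⟨t, ht1, ht2, ht3⟩ := (hev1.and (hev2.and hev3)).exists
  have htpos : (0:ℝ) < t := ht2
  have hht : 0 < h t := by
    have hq : 0 < h t / t := lt_trans (by linarith [hc.d0_pos]) ht1
    rcases div_pos_iff.mp hq with ⟨hp, -⟩ | ⟨-, hn⟩
    · exact hp
    · linarith
  have hmono := hc.mono (Set.mem_Icc.mpr ⟨le_of_lt htpos, le_of_lt ht3⟩)
    (Set.mem_Icc.mpr ⟨zero_le_one, le_refl 1⟩) (le_of_lt ht3)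
  linarith

lemma D1_nonneg {h : ℝ → ℝ} {D0 D1 : ℝ} (hc : CostFn h D0 D1) : 0 ≤ D1 := by
  refine ge_of_tendsto hc.d1 ?_
  have hev2 : ∀ᶠ t in nhdsWithin 1 (Set.Iio 1), t ∈ Set.Iio (1:ℝ) :=
    eventually_mem_nhdsWithin
  have hev3 : ∀ᶠ t in nhdsWithin 1 (Set.Iio 1), (0:ℝ) < t :=
    eventually_nhdsWithin_of_eventually_nhds (eventually_gt_nhds one_pos)
  filter_upwards [hev2, hev3] with t ht1 ht0
  have hmono := hc.mono (Set.mem_Icc.mpr ⟨le_of_lt ht0, le_of_lt ht1⟩)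
    (Set.mem_Icc.mpr ⟨zero_le_one, le_refl 1⟩) (le_of_lt ht1)
  have : (0:ℝ) < 1 - t := by
    simp only [Set.mem_Iio] at ht1
    linarith
  apply div_nonneg <;> linarith

lemma ev_lt_of_lt_liminf {f : ℝ → ℝ} {l : Filter ℝ} [l.NeBot] {κ b : ℝ} (hκ : 0 < κ)
    (hliminf : κ ≤ Filter.liminf f l) (hb : b < κ) : ∀ᶠ t in l, b < f t := by
  by_cases hbd : Filter.IsBoundedUnder (· ≥ ·) l f
  · exact Filter.eventually_lt_of_lt_liminf (lt_of_lt_of_le hb hliminf) hbd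
  · exfalso
    have hempty : {a : ℝ | ∀ᶠ t in l, a ≤ f t} = ∅ := by
      rw [Set.eq_empty_iff_forall_notMem]
      intro a ha
      exact hbd ⟨a, Filter.eventually_map.mpr ha⟩
    rw [Filter.liminf_eq, hempty, Real.sSup_empty] at hliminf
    linarith

lemma Wh_self_le [Fintype V] (hconn : H.Connected) {h : ℝ → ℝ}
    (hnn : ∀ t ∈ Set.Icc (0:ℝ) 1, 0 ≤ h t) {μ : V → ℝ} (hμ : IsProb μ) :
    Wh H h μ μ ≤ 0 :=
  csInf_le ⟨0, Wh_set_nonneg H hconn hnn⟩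
    ⟨0, fun _ => μ, ⟨rfl, rfl, fun _ _ => hμ, by omega⟩, by simp⟩


lemma main_bound [Fintype V] (hconn : H.Connected) {h : ℝ → ℝ} {D0 D1 : ℝ}
    (hc : CostFn h D0 D1) {κ : ℝ} (hκ : 0 < κ)
    (hlb : ∀ x y : V, H.Adj x y → κ ≤ hLLY H h x y)
    {x y : V} (hd1 : 1 ≤ H.dist x y) :
    κ * ((H.dist x y : ℝ) * h 1) ≤ 2 * D1 := by
  have hh1 := h1_pos hc
  set d := H.dist x y with hdd
  have hdh : 0 < (d:ℝ) * h 1 :=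
    mul_pos (by exact_mod_cast hd1) hh1
  suffices hsuff : ∀ b, 0 < b → b < κ → b * ((d:ℝ) * h 1) ≤ 2 * D1 by
    by_contra hcon
    push_neg at hcon
    set q : ℝ := 2 * D1 / ((d:ℝ) * h 1) with hqdef
    have hq : q * ((d:ℝ) * h 1) = 2 * D1 := div_mul_cancel₀ _ (ne_of_gt hdh)
    have hqκ : q < κ := by
      rw [hqdef, div_lt_iff₀ hdh]
      linarith
    have hqnn : 0 ≤ q := div_nonneg (by linarith [D1_nonneg hc]) (le_of_lt hdh)
    have hb := hsuff ((q + κ)/2) (by linarith) (by linarith)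
    nlinarith
  intro b hb0 hbκ
  obtain ⟨f, hf0, hfL, hfstep⟩ := isPath_dist H hconn x y
  have hne : ∀ i < d, f i ≠ f (i+1) := fun i hi => consec_ne_of_min H hf0 hfL hfstep
      (fun m hm hp => absurd (dist_le H hp) (by omega)) hi
  have hadj : ∀ i < d, H.Adj (f i) (f (i+1)) := by
    intro i hi
    obtain ⟨e, he, ha1, ha2⟩ := hfstep i hi
    exact ⟨hne i hi, e, he, ha1, ha2⟩
  have hdegpos : ∀ i ≤ d, 0 < H.degree (f i) := by
    intro i hi
    by_cases hid : i < d
    · exact degree_pos H (hadj i hid)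
    · have hieq : i = d := by omega
      subst hieq
      have hA := hadj (d-1) (by omega)
      rw [show d - 1 + 1 = d by omega] at hA
      obtain ⟨hAne, e, he, hA1, hA2⟩ := hA
      exact degree_pos H ⟨Ne.symm hAne, e, he, hA2, hA1⟩
  have hev : ∀ᶠ α in nhdsWithin 1 (Set.Iio 1), ∀ i ∈ Finset.range d,
      b < ORic H h α (f i) (f (i+1)) / (1 - α) := by
    rw [Filter.eventually_all_finset]
    intro i hi
    exact ev_lt_of_lt_liminf hκ (hlb _ _ (hadj i (Finset.mem_range.mp hi))) hbκ
  have hev2 : ∀ᶠ α in nhdsWithin 1 (Set.Iio 1), α ∈ Set.Iio (1:ℝ) :=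
    eventually_mem_nhdsWithin
  have hev3 : ∀ᶠ α in nhdsWithin (1:ℝ) (Set.Iio 1), (1/2 : ℝ) < α :=
    eventually_nhdsWithin_of_eventually_nhds (eventually_gt_nhds (by norm_num))
  -- shared upper bound chain, for a fixed good α
  have hupper : ∀ α : ℝ, 1/2 < α → α < 1 →
      (∀ i ∈ Finset.range d, b < ORic H h α (f i) (f (i+1)) / (1 - α)) →
      Wh H h (rw H α x) (rw H α y) ≤ (d:ℝ) * ((1 - b*(1-α)) * h 1) := by
    intro α hα2 hα1 hOR
    have h1α : (0:ℝ) < 1 - α := by linarith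
    have hprob : ∀ i ≤ d, IsProb (rw H α (f i)) :=
      fun i hi => isProb_rw H (by linarith) (by linarith) (hdegpos i hi)
    have hedge : ∀ i < d, Wh H h (rw H α (f i)) (rw H α (f (i+1)))
        ≤ (1 - b*(1-α)) * h 1 := by
      intro i hi
      have hORi := hOR i (Finset.mem_range.mpr hi)
      have hWhδ : Wh H h (dirac (f i)) (dirac (f (i+1))) = h 1 :=
        Wh_dirac_adj H hconn hc (hadj i hi)
      have hlt : b * (1-α) < ORic H h α (f i) (f (i+1)) := by
        have := (lt_div_iff₀ h1α).mp hORi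
        linarith
      rw [ORic, hWhδ] at hlt
      have := (div_lt_iff₀ hh1).mp (by linarith :
        Wh H h (rw H α (f i)) (rw H α (f (i+1))) / h 1 < 1 - b*(1-α))
      linarith
    have hchain : ∀ n, n ≤ d → Wh H h (rw H α (f 0)) (rw H α (f n))
        ≤ ∑ i ∈ Finset.range n, Wh H h (rw H α (f i)) (rw H α (f (i+1))) := by
      intro n
      induction n with
      | zero =>
        intro _
        simpa using Wh_self_le H hconn hc.nonneg (hprob 0 (by omega))
      | succ n ih =>
        intro hn
        have htri := Wh_triangle H hconn hc.nonneg (hprob 0 (by omega))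
          (hprob n (by omega)) (hprob (n+1) hn)
        rw [Finset.sum_range_succ]
        linarith [ih (by omega)]
    have hfin := hchain d (le_refl d)
    rw [hf0, hfL] at hfin
    refine le_trans hfin (le_trans (Finset.sum_le_sum fun i hi =>
      hedge i (Finset.mem_range.mp hi)) ?_)
    rw [Finset.sum_const, Finset.card_range, nsmul_eq_mul]
  rcases eq_or_lt_of_le hd1 with hd_eq | hd_ge2
  · -- d = 1
    have hkey : ∀ᶠ α in nhdsWithin 1 (Set.Iio 1),
        b * ((d:ℝ) * h 1) ≤ 2 * ((h 1 - h (2*α - 1)) / (1 - (2*α - 1))) := by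
      filter_upwards [hev, hev2, hev3] with α hOR hα1' hα2
      have hα1 : α < 1 := hα1'
      have h1α : (0:ℝ) < 1 - α := by linarith
      have hprobx : IsProb (rw H α x) := by
        rw [← hf0]; exact isProb_rw H (by linarith) (by linarith) (hdegpos 0 (by omega))
      have hproby : IsProb (rw H α y) := by
        rw [← hfL]; exact isProb_rw H (by linarith) (by linarith) (hdegpos d (le_refl d))
      have hlow : h (2*α - 1) ≤ Wh H h (rw H α x) (rw H α y) := by
        have hcut := cut_lower_bound H hconn hc x hprobx hproby {1} (fun _ => 2*α - 1)
          (fun k _ => ⟨by show (0:ℝ) ≤ 2*α - 1; linarith, by show (2*α - 1:ℝ) ≤ 1; linarith⟩) ?_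
        · simpa using hcut
        · intro k hk
          simp only [Finset.mem_singleton] at hk
          subst hk
          have hF1ν : α ≤ ∑ v, if 1 ≤ H.dist x v then rw H α y v else 0 := by
            have := Fk_ge_center H (ρ := rw H α y) (y := y) (x := x)
              (fun v => hproby.1 v) (by omega : 1 ≤ H.dist x y)
            rwa [show rw H α y y = α from if_pos rfl] at this
          have hF1μ : (∑ v, if 1 ≤ H.dist x v then rw H α x v else 0) ≤ 1 - α :=
            Fk_rw_near H hprobx (le_refl 1)
          show (2*α - 1 : ℝ) ≤ _
          linarith
      have hup := hupper α hα2 hα1 hOR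
      have hcomb : h (2*α - 1) ≤ (d:ℝ) * ((1 - b*(1-α)) * h 1) := le_trans hlow hup
      rw [← hd_eq] at hcomb ⊢
      simp only [Nat.cast_one, one_mul] at hcomb ⊢
      have hstep1 : b * (1-α) * h 1 ≤ h 1 - h (2*α-1) := by nlinarith
      have hstep2 : b * h 1 ≤ (h 1 - h (2*α-1)) / (1-α) := by
        rw [le_div_iff₀ h1α]
        nlinarith
      have heq : (h 1 - h (2*α-1)) / (1-α) = 2 * ((h 1 - h (2*α - 1)) / (1 - (2*α - 1))) := by
        rw [show (1 - (2*α - 1)) = 2*(1-α) by ring]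
        have hne' : (1:ℝ) - α ≠ 0 := ne_of_gt h1α
        field_simp
      rw [← heq]
      exact hstep2
    have hlim : Filter.Tendsto (fun α : ℝ => 2 * ((h 1 - h (2*α - 1)) / (1 - (2*α - 1))))
        (nhdsWithin 1 (Set.Iio 1)) (nhds (2 * D1)) := by
      have hg : Filter.Tendsto (fun α : ℝ => 2*α - 1) (nhdsWithin 1 (Set.Iio 1))
          (nhdsWithin 1 (Set.Iio 1)) := by
        rw [tendsto_nhdsWithin_iff]
        constructor
        · have hcont : Continuous (fun α : ℝ => 2*α - 1) := by continuity
          have := hcont.tendsto 1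
          norm_num at this
          exact this.mono_left nhdsWithin_le_nhds
        · filter_upwards [eventually_mem_nhdsWithin] with α hα
          simp only [Set.mem_Iio] at hα ⊢
          linarith
      exact (hc.d1.comp hg).const_mul 2
    exact ge_of_tendsto hlim hkey
  · -- 2 ≤ d
    have hd2 : 2 ≤ d := hd_ge2
    have hkey : ∀ᶠ α in nhdsWithin 1 (Set.Iio 1),
        b * ((d:ℝ) * h 1) ≤ 2 * ((h 1 - h α) / (1 - α)) := by
      filter_upwards [hev, hev2, hev3] with α hOR hα1' hα2
      have hα1 : α < 1 := hα1'
      have h1α : (0:ℝ) < 1 - α := by linarith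
      have hprobx : IsProb (rw H α x) := by
        rw [← hf0]; exact isProb_rw H (by linarith) (by linarith) (hdegpos 0 (by omega))
      have hproby : IsProb (rw H α y) := by
        rw [← hfL]; exact isProb_rw H (by linarith) (by linarith) (hdegpos d (le_refl d))
      set c : ℕ → ℝ := fun k => if k = 1 ∨ k = d then α else 1 with hcdef
      have hlow : 2 * h α + ((d:ℝ) - 2) * h 1 ≤ Wh H h (rw H α x) (rw H α y) := by
        have hcut := cut_lower_bound H hconn hc x hprobx hproby (Finset.Icc 1 d) c ?_ ?_
        · refine le_trans (le_of_eq ?_) hcut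
          have hsplit : Finset.Icc 1 d = insert 1 (insert d (Finset.Icc 2 (d-1))) := by
            ext k
            simp only [Finset.mem_Icc, Finset.mem_insert]
            omega
          have hnm1 : (1:ℕ) ∉ insert d (Finset.Icc 2 (d-1)) := by
            simp only [Finset.mem_insert, Finset.mem_Icc]
            omega
          have hnmd : d ∉ Finset.Icc 2 (d-1) := by
            simp only [Finset.mem_Icc]
            omega
          rw [hsplit, Finset.sum_insert hnm1, Finset.sum_insert hnmd]
          have hc1 : c 1 = α := if_pos (Or.inl rfl)
          have hcd : c d = α := if_pos (Or.inr rfl)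
          have hcm : ∀ k ∈ Finset.Icc 2 (d-1), h (c k) = h 1 := by
            intro k hk
            simp only [Finset.mem_Icc] at hk
            have hnk : ¬(k = 1 ∨ k = d) := by omega
            rw [show c k = 1 from if_neg hnk]
          rw [hc1, hcd, Finset.sum_congr rfl hcm, Finset.sum_const, Nat.card_Icc]
          rw [nsmul_eq_mul]
          have : ((d - 1 + 1 - 2 : ℕ) : ℝ) = (d:ℝ) - 2 := by
            have : d - 1 + 1 - 2 = d - 2 := by omega
            rw [this, Nat.cast_sub hd2]
            norm_num
          rw [this]
          ring
        · intro k hk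
          by_cases hki : k = 1 ∨ k = d
          · rw [show c k = α from if_pos hki]
            exact ⟨by linarith, by linarith⟩
          · rw [show c k = 1 from if_neg hki]
            exact ⟨zero_le_one, le_refl 1⟩
        · intro k hk
          simp only [Finset.mem_Icc] at hk
          by_cases hki : k = 1 ∨ k = d
          · have hcval : c k = α := if_pos hki
            rw [hcval]
            rcases hki with hk1 | hkd
            · subst hk1
              have hF1ν : (∑ v, if 1 ≤ H.dist x v then rw H α y v else 0) = 1 :=
                Fk_eq_one_far H hconn hproby (by omega)
              have hF1μ : (∑ v, if 1 ≤ H.dist x v then rw H α x v else 0) ≤ 1 - α :=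
                Fk_rw_near H hprobx (le_refl 1)
              rw [hF1ν]
              linarith
            · rw [hkd]
              have hFdν : α ≤ ∑ v, if d ≤ H.dist x v then rw H α y v else 0 := by
                have := Fk_ge_center H (ρ := rw H α y) (y := y) (x := x)
                  (fun v => hproby.1 v) (le_refl (H.dist x y))
                rwa [show rw H α y y = α from if_pos rfl] at this
              have hFdμ : (∑ v, if d ≤ H.dist x v then rw H α x v else 0) = 0 :=
                Fk_rw_far_zero H hconn hd2
              rw [hFdμ]
              linarith
          · have hcval : c k = 1 := if_neg hki
            rw [hcval]
            have hk2 : 2 ≤ k := by omega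
            have hFkν : (∑ v, if k ≤ H.dist x v then rw H α y v else 0) = 1 :=
              Fk_eq_one_far H hconn hproby (by omega)
            have hFkμ : (∑ v, if k ≤ H.dist x v then rw H α x v else 0) = 0 :=
              Fk_rw_far_zero H hconn hk2
            rw [hFkν, hFkμ]
            norm_num
      have hup := hupper α hα2 hα1 hOR
      have hcomb := le_trans hlow hup
      have hdR : (2:ℝ) ≤ (d:ℝ) := by exact_mod_cast hd2
      have hstep2 : b * ((d:ℝ) * h 1) ≤ (2 * h 1 - 2 * h α) / (1-α) := by
        rw [le_div_iff₀ h1α]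
        nlinarith
      have heq : (2 * h 1 - 2 * h α) / (1-α) = 2 * ((h 1 - h α) / (1 - α)) := by
        rw [show (2 * h 1 - 2 * h α) = 2*(h 1 - h α) by ring, mul_div_assoc]
      rw [← heq]
      exact hstep2
    have hlim : Filter.Tendsto (fun α : ℝ => 2 * ((h 1 - h α) / (1 - α)))
        (nhdsWithin 1 (Set.Iio 1)) (nhds (2 * D1)) := hc.d1.const_mul 2
    exact ge_of_tendsto hlim hkey

end BM

end

/-- Bonnet–Myers type inequality for the `h`-LLY–Ricci curvature. -/
theorem bonnet_myers {V : Type*} (H : Hypergraph' V)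
    (hconn : H.Connected) (hlf : H.LocallyFinite) (hsimp : H.Simple)
    (h : ℝ → ℝ) (D0 D1 : ℝ) (hc : CostFn h D0 D1)
    (κ : ℝ) (hκ : 0 < κ)
    (hlb : ∀ x y : V, H.Adj x y → κ ≤ hLLY H h x y) :
    ∀ x y : V, (H.dist x y : ℤ) ≤ ⌊(D1 / h 1) * (2 / κ)⌋ := by
  intro x y
  have hh1 := BM.h1_pos hc
  have hD1 := BM.D1_nonneg hc
  have hval : (0:ℝ) ≤ (D1 / h 1) * (2 / κ) :=
    mul_nonneg (div_nonneg hD1 hh1.le) (div_nonneg (by norm_num) hκ.le)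
  have hfloor0 : (0:ℤ) ≤ ⌊(D1 / h 1) * (2 / κ)⌋ := by
    apply Int.le_floor.mpr
    simpa using hval
  cases finite_or_infinite V with
  | inr hinf =>
    haveI := hinf
    obtain ⟨u⟩ : Nonempty V := inferInstance
    obtain ⟨v, hvu⟩ := exists_ne u
    obtain ⟨a, b, hadj⟩ := BM.exists_adj_of_ne H hconn hvu
    have h0 := BM.hLLY_eq_zero H hconn hc.zero hadj
    have hκle := hlb a b hadj
    rw [h0] at hκle
    linarith
  | inl hfin =>
    haveI := Fintype.ofFinite V
    by_cases hd : 1 ≤ H.dist x y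
    · have hmb := BM.main_bound H hconn hc hκ hlb hd
      apply Int.le_floor.mpr
      have hcast : (((H.dist x y : ℤ)) : ℝ) = (H.dist x y : ℝ) := by push_cast; ring
      rw [hcast, div_mul_div_comm, le_div_iff₀ (by positivity)]
      linear_combination hmb
    · have hzero : H.dist x y = 0 := by omega
      rw [hzero]
      exact_mod_cast hfloor0
end

section
/- For any hypergraph H and any two vertices x, y with d(x,y) ≥ 2, the h-LLY–Ricci curvature satisfies κ̃(h;x,y) ≤ 2h'(1)/(h(1)·d(x,y)). -/
open Filter Set Classical

namespace HLLYAux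
open Hypergraph'

variable {V : Type*} {H : Hypergraph' V}

lemma isPath_refl (x : V) : H.IsPath x x 0 :=
  ⟨fun _ => x, rfl, rfl, by simp⟩

lemma isPath_symm {x y : V} {n : ℕ} (hp : H.IsPath x y n) : H.IsPath y x n := by
  obtain ⟨f, h0, hn, hstep⟩ := hp
  refine ⟨fun i => f (n - i), by simpa using hn, by simpa using h0, ?_⟩
  intro i hi
  obtain ⟨e, he, h1, h2⟩ := hstep (n - i - 1) (by omega)
  have e1 : n - i - 1 + 1 = n - i := by omega
  have e2 : n - (i + 1) = n - i - 1 := by omega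
  refine ⟨e, he, ?_, ?_⟩
  · show f (n - i) ∈ e
    rw [← e1]; exact h2
  · show f (n - (i + 1)) ∈ e
    rw [e2]; exact h1

lemma isPath_concat {x y z : V} {m n : ℕ} (h1 : H.IsPath x y m)
    (h2 : H.IsPath y z n) : H.IsPath x z (m + n) := by
  obtain ⟨f, hf0, hfm, hf⟩ := h1
  obtain ⟨g, hg0, hgn, hg⟩ := h2
  refine ⟨fun i => if i ≤ m then f i else g (i - m), by simpa using hf0, ?_, ?_⟩
  · by_cases hn : n = 0
    · subst hn; simpa [hfm, ← hg0] using hgn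
    · have : ¬ (m + n ≤ m) := by omega
      simp only [this, if_false]
      simpa using hgn
  · intro i hi
    by_cases him : i < m
    · obtain ⟨e, he, ha, hb⟩ := hf i him
      have t1 : i ≤ m := by omega
      have t2 : i + 1 ≤ m := by omega
      exact ⟨e, he, by simp [t1, ha], by simp [t2, hb]⟩
    · obtain ⟨e, he, ha, hb⟩ := hg (i - m) (by omega)
      have t2 : ¬ (i + 1 ≤ m) := by omega
      have t3 : i + 1 - m = i - m + 1 := by omega
      refine ⟨e, he, ?_, by simp [t2, t3, hb]⟩
      by_cases t1 : i ≤ m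
      · have : i = m := by omega
        subst this
        simp only [le_refl, if_true, hfm, ← hg0]
        simpa using ha
      · simp only [t1, if_false]; exact ha

variable (hconn : H.Connected)
include hconn

lemma dist_isPath (x y : V) : H.IsPath x y (H.dist x y) :=
  Nat.sInf_mem (hconn x y)

omit hconn in
lemma dist_le {x y : V} {n : ℕ} (hp : H.IsPath x y n) : H.dist x y ≤ n :=
  Nat.sInf_le hp

omit hconn in
lemma dist_self (x : V) : H.dist x x = 0 :=
  Nat.le_zero.mp (dist_le (isPath_refl x))

lemma dist_eq_zero {x y : V} (hd : H.dist x y = 0) : x = y := by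
  obtain ⟨f, h0, hn, -⟩ := dist_isPath hconn x y
  rw [hd] at hn; rw [← h0, ← hn]

omit hconn in
lemma dist_le_one_of_edge {e : Set V} {a b : V} (he : e ∈ H.E) (ha : a ∈ e)
    (hb : b ∈ e) : H.dist a b ≤ 1 := by
  refine dist_le ⟨fun i => if i = 0 then a else b, by simp, by simp, ?_⟩
  intro i hi
  have : i = 0 := by omega
  subst this
  exact ⟨e, he, by simp [ha], by simp [hb]⟩

lemma dist_triangle (x y z : V) : H.dist x z ≤ H.dist x y + H.dist y z :=
  dist_le (isPath_concat (dist_isPath hconn x y) (dist_isPath hconn y z))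

lemma dist_comm (x y : V) : H.dist x y = H.dist y x :=
  le_antisymm (dist_le (isPath_symm (dist_isPath hconn y x)))
    (dist_le (isPath_symm (dist_isPath hconn x y)))

end HLLYAux

section CostLemmas

variable {h : ℝ → ℝ} {D0 D1 : ℝ} (hc : CostFn h D0 D1)
include hc

omit hc in
lemma aux_zero_mem : (0:ℝ) ∈ Set.Icc (0:ℝ) 1 := by simp
omit hc in
lemma aux_one_mem : (1:ℝ) ∈ Set.Icc (0:ℝ) 1 := by simp

lemma cost_le_mul {a : ℝ} (ha : a ∈ Set.Icc (0:ℝ) 1) : a * h 1 ≤ h a := by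
  have hp : (0:ℝ) ≤ a := ha.1
  have hq : (0:ℝ) ≤ 1 - a := by linarith [ha.2]
  have := hc.concave.2 aux_one_mem aux_zero_mem hp hq (by ring)
  simp only [smul_eq_mul, mul_one, mul_zero, add_zero, hc.zero] at this
  exact this

lemma cost_subadd {a b : ℝ} (ha : a ∈ Set.Icc (0:ℝ) 1) (hb : b ∈ Set.Icc (0:ℝ) 1) :
    h (min (a + b) 1) ≤ h a + h b := by
  rcases le_or_gt (a + b) 1 with hab | hab
  · rw [min_eq_left hab]
    rcases eq_or_lt_of_le (by linarith [ha.1, hb.1] : (0:ℝ) ≤ a + b) with h0 | h0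
    · have ha0 : a = 0 := by linarith [ha.1, hb.1]
      have hb0 : b = 0 := by linarith [ha.1, hb.1]
      simp [ha0, hb0, ← h0, hc.zero]
    · have hmem : a + b ∈ Set.Icc (0:ℝ) 1 := ⟨le_of_lt h0, hab⟩
      have key : ∀ c : ℝ, 0 ≤ c → c ≤ a + b → (c / (a + b)) * h (a + b) ≤ h c := by
        intro c hc0 hcab
        have hp : (0:ℝ) ≤ c / (a + b) := div_nonneg hc0 h0.le
        have hq : (0:ℝ) ≤ 1 - c / (a + b) := by
          rw [sub_nonneg]
          exact div_le_one_of_le₀ hcab h0.le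
        have hcon := hc.concave.2 hmem aux_zero_mem hp hq (by ring)
        have heq : c / (a + b) * (a + b) = c := by field_simp
        simp only [smul_eq_mul, mul_zero, add_zero, hc.zero, heq] at hcon
        exact hcon
      have h1 := key a ha.1 (by linarith [hb.1])
      have h2 := key b hb.1 (by linarith [ha.1])
      have heq : a / (a+b) * h (a+b) + b / (a+b) * h (a+b) = h (a+b) := by
        field_simp
      linarith
  · rw [min_eq_right (le_of_lt hab)]
    have h1 : a * h 1 ≤ h a := cost_le_mul hc ha
    have h2 : b * h 1 ≤ h b := cost_le_mul hc hb
    have hh1 : 0 ≤ h 1 := hc.nonneg 1 aux_one_mem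
    nlinarith

/-- Key concavity lemma. -/
lemma cost_sum_bound {ι : Type*} (S : Finset ι) (t : ι → ℝ) :
    (∀ i ∈ S, t i ∈ Set.Icc (0:ℝ) 1) →
    h (min (∑ i ∈ S, t i) 1) ≤ ∑ i ∈ S, h (t i) := by
  classical
  induction S using Finset.induction_on with
  | empty => intro _; simp [hc.zero]
  | @insert a S hins ih =>
    intro ht
    rw [Finset.sum_insert hins, Finset.sum_insert hins]
    have hta := ht _ (Finset.mem_insert_self a S)
    have hsum0 : (0:ℝ) ≤ ∑ i ∈ S, t i :=
      Finset.sum_nonneg fun i hi => (ht i (Finset.mem_insert_of_mem hi)).1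
    have hmin : min (∑ i ∈ S, t i) 1 ∈ Set.Icc (0:ℝ) 1 :=
      ⟨le_min hsum0 zero_le_one, min_le_right _ _⟩
    have harg : min (t a + ∑ i ∈ S, t i) 1 ≤ min (t a + min (∑ i ∈ S, t i) 1) 1 := by
      rcases le_or_gt (∑ i ∈ S, t i) 1 with hl | hl
      · rw [min_eq_left hl]
      · rw [min_eq_right hl.le]
        have he1 : min (t a + ∑ i ∈ S, t i) 1 = 1 := min_eq_right (by linarith [hta.1])
        rw [he1]
        exact le_min (by linarith [hta.1]) le_rfl
    have hmem1 : min (t a + ∑ i ∈ S, t i) 1 ∈ Set.Icc (0:ℝ) 1 :=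
      ⟨le_min (add_nonneg hta.1 hsum0) zero_le_one, min_le_right _ _⟩
    have hmem2 : min (t a + min (∑ i ∈ S, t i) 1) 1 ∈ Set.Icc (0:ℝ) 1 :=
      ⟨le_min (add_nonneg hta.1 hmin.1) zero_le_one, min_le_right _ _⟩
    calc h (min (t a + ∑ i ∈ S, t i) 1) ≤ h (min (t a + min (∑ i ∈ S, t i) 1) 1) :=
          hc.mono hmem1 hmem2 harg
      _ ≤ h (t a) + h (min (∑ i ∈ S, t i) 1) := cost_subadd hc hta hmin
      _ ≤ h (t a) + ∑ i ∈ S, h (t i) := by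
          have := ih (fun i hi => ht i (Finset.mem_insert_of_mem hi))
          linarith

lemma cost_sum_bound' {ι : Type*} (S : Finset ι) (t : ι → ℝ) (c : ℝ)
    (ht : ∀ i ∈ S, t i ∈ Set.Icc (0:ℝ) 1) (hc01 : c ∈ Set.Icc (0:ℝ) 1)
    (hle : c ≤ ∑ i ∈ S, t i) : h c ≤ ∑ i ∈ S, h (t i) := by
  refine le_trans ?_ (cost_sum_bound hc S t ht)
  apply hc.mono hc01
  · exact ⟨le_min (le_trans hc01.1 hle) zero_le_one, min_le_right _ _⟩
  · exact le_min hle hc01.2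

end CostLemmas

section InfiniteCase

open Hypergraph'

lemma not_summable_of_one_le {ι : Type*} {f : ι → ℝ} {s : Set ι}
    (hs : s.Infinite) (h1 : ∀ i ∈ s, 1 ≤ f i) : ¬ Summable f := by
  intro hsum
  have h2 := hsum.tendsto_cofinite_zero
  rw [Metric.tendsto_nhds] at h2
  have h3 := h2 1 one_pos
  rw [Filter.eventually_cofinite] at h3
  refine (hs.mono ?_) h3
  intro i hi
  have h4 := h1 i hi
  simp only [Set.mem_setOf_eq, Real.dist_eq, sub_zero, not_lt]
  rw [abs_of_nonneg (by linarith)]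
  exact h4

lemma W1_nonneg {V : Type*} (H : Hypergraph' V) (μ ν : V → ℝ) : 0 ≤ W1 H μ ν := by
  apply Real.sInf_nonneg
  rintro c ⟨π, hπ, rfl⟩
  exact tsum_nonneg fun p => mul_nonneg (by positivity) (hπ.1 _ _)

lemma W1_eq_zero_of_infinite {V : Type*} [Infinite V] {H : Hypergraph' V}
    (hconn : H.Connected) {μ ν : V → ℝ} (hμ : IsProb μ) (hν : IsProb ν) :
    W1 H μ ν = 0 := by
  classical
  set s : Set V := Function.support μ ∪ Function.support ν with hs
  have hsfin : s.Finite := hμ.2.1.union hν.2.1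
  have hinf : sᶜ.Infinite := hsfin.infinite_compl
  set g : ℕ → V := fun n => (hinf.natEmbedding _ n : V) with hg
  have hginj : Function.Injective g := fun a b hab => by
    exact (hinf.natEmbedding _).injective (Subtype.ext hab)
  have hgs : ∀ n, g n ∉ s := fun n => (hinf.natEmbedding _ n).2
  set π : V → V → ℝ :=
    fun a b => μ a * ν b + (if (∃ i, g i = a) ∧ (∃ j, g j = b) then 1 else 0) with hπdef
  have hμg : ∀ i, μ (g i) = 0 := fun i => by
    by_contra hne
    exact hgs i (Or.inl (Function.mem_support.mpr hne))
  have hνg : ∀ j, ν (g j) = 0 := fun j => by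
    by_contra hne
    exact hgs j (Or.inr (Function.mem_support.mpr hne))
  have hcoup : IsCoupling π μ ν := by
    refine ⟨fun a b => add_nonneg (mul_nonneg (hμ.1 a) (hν.1 b)) (by split <;> norm_num), ?_, ?_⟩
    · intro a
      by_cases ha : ∃ i, g i = a
      · obtain ⟨i, rfl⟩ := ha
        have : (fun b => π (g i) b) = fun b => if ∃ j, g j = b then 1 else 0 := by
          funext b
          have hex : (∃ i', g i' = g i) := ⟨i, rfl⟩
          simp [hπdef, hμg i, hex]
        rw [this]
        rw [tsum_eq_zero_of_not_summable, hμg i]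
        apply not_summable_of_one_le (Set.infinite_range_of_injective hginj)
        rintro b ⟨j, rfl⟩
        simp
      · have : (fun b => π a b) = fun b => μ a * ν b := by
          funext b; simp [hπdef, ha]
        rw [this, tsum_mul_left, hν.2.2, mul_one]
    · intro b
      by_cases hb : ∃ j, g j = b
      · obtain ⟨j, rfl⟩ := hb
        have : (fun a => π a (g j)) = fun a => if ∃ i, g i = a then 1 else 0 := by
          funext a
          have hex : (∃ j', g j' = g j) := ⟨j, rfl⟩
          simp [hπdef, hνg j, hex]
        rw [this]
        rw [tsum_eq_zero_of_not_summable, hνg j]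
        apply not_summable_of_one_le (Set.infinite_range_of_injective hginj)
        rintro a ⟨i, rfl⟩
        simp
      · have : (fun a => π a b) = fun a => μ a * ν b := by
          funext a; simp [hπdef, hb]
        rw [this, tsum_mul_right, hμ.2.2, one_mul]
  have hcost : ∑' p : V × V, (H.dist p.1 p.2 : ℝ) * π p.1 p.2 = 0 := by
    apply tsum_eq_zero_of_not_summable
    apply not_summable_of_one_le
      (Set.infinite_range_of_injective (f := fun j : ℕ => ((g 0 : V), g (j+1)))
        (fun a b hab => by
          simp only [Prod.mk.injEq] at hab
          exact Nat.succ_injective (hginj hab.2)))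
    rintro p ⟨j, rfl⟩
    have hne : g 0 ≠ g (j+1) := fun hEq => by simpa using hginj hEq
    have hd1 : 1 ≤ H.dist (g 0) (g (j+1)) := by
      rcases Nat.eq_zero_or_pos (H.dist (g 0) (g (j+1))) with h0 | h0
      · exact absurd (HLLYAux.dist_eq_zero hconn h0) hne
      · exact h0
    have hπ1 : 1 ≤ π (g 0) (g (j+1)) := by
      have : (if (∃ i, g i = g 0) ∧ (∃ i, g i = g (j+1)) then (1:ℝ) else 0) = 1 := by
        rw [if_pos ⟨⟨0, rfl⟩, ⟨j+1, rfl⟩⟩]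
      simp only [hπdef, this]
      nlinarith [mul_nonneg (hμ.1 (g 0)) (hν.1 (g (j+1)))]
    calc (1:ℝ) = 1 * 1 := by ring
      _ ≤ (H.dist (g 0) (g (j+1)) : ℝ) * π (g 0) (g (j+1)) := by
          apply mul_le_mul _ hπ1 zero_le_one (by positivity)
          exact_mod_cast hd1
  have hmem : (0:ℝ) ∈ {c | ∃ π', IsCoupling π' μ ν ∧
      c = ∑' p : V × V, (H.dist p.1 p.2 : ℝ) * π' p.1 p.2} :=
    ⟨π, hcoup, hcost.symm⟩
  refine le_antisymm (csInf_le ⟨0, ?_⟩ hmem) (W1_nonneg H μ ν)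
  rintro c ⟨π', hπ', rfl⟩
  exact tsum_nonneg fun p => mul_nonneg (by positivity) (hπ'.1 _ _)

lemma Wh_eq_zero_of_infinite {V : Type*} [Infinite V] {H : Hypergraph' V}
    (hconn : H.Connected) {h : ℝ → ℝ} (hh0 : h 0 = 0) (μ ν : V → ℝ) :
    Wh H h μ ν = 0 := by
  have hkey : ∀ c ∈ {c | ∃ I ξ, WhAdmissible H μ ν I ξ ∧
      c = ∑ i ∈ Finset.range I, h (W1 H (ξ i) (ξ (i + 1)))}, c = 0 := by
    rintro c ⟨I, ξ, hadm, rfl⟩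
    apply Finset.sum_eq_zero
    intro i hi
    rw [Finset.mem_range] at hi
    rw [W1_eq_zero_of_infinite hconn (hadm.2.2.1 i (by omega)) (hadm.2.2.1 (i+1) (by omega)),
      hh0]
  rcases Set.eq_empty_or_nonempty {c | ∃ I ξ, WhAdmissible H μ ν I ξ ∧
      c = ∑ i ∈ Finset.range I, h (W1 H (ξ i) (ξ (i + 1)))} with hemp | ⟨c, hcmem⟩
  · rw [Wh, hemp, Real.sInf_empty]
  · have hc0 := hkey c hcmem
    refine le_antisymm ?_ ?_
    · rw [Wh]
      calc sInf _ ≤ c := csInf_le ⟨0, fun b hb => le_of_eq (hkey b hb).symm⟩ hcmem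
        _ = 0 := hc0
    · rw [Wh]
      apply Real.sInf_nonneg
      intro b hb
      exact le_of_eq (hkey b hb).symm

end InfiniteCase

section FiniteW1

open Hypergraph' HLLYAux

variable {V : Type*} [Fintype V] {H : Hypergraph' V} {μ ν : V → ℝ}

lemma prob_sum (hμ : IsProb μ) : ∑ v, μ v = 1 := by
  rw [← tsum_fintype (L := .unconditional _)]; exact hμ.2.2

lemma prod_coupling (hμ : IsProb μ) (hν : IsProb ν) :
    IsCoupling (fun a b => μ a * ν b) μ ν := by
  refine ⟨fun a b => mul_nonneg (hμ.1 a) (hν.1 b), ?_, ?_⟩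
  · intro a; rw [tsum_mul_left, hν.2.2, mul_one]
  · intro b; rw [tsum_mul_right, hμ.2.2, one_mul]

lemma W1_le_of_coupling {π : V → V → ℝ} (hπ : IsCoupling π μ ν) :
    W1 H μ ν ≤ ∑' p : V × V, (H.dist p.1 p.2 : ℝ) * π p.1 p.2 := by
  have hmem : (∑' p : V × V, (H.dist p.1 p.2 : ℝ) * π p.1 p.2) ∈
      {c | ∃ π', IsCoupling π' μ ν ∧
        c = ∑' p : V × V, (H.dist p.1 p.2 : ℝ) * π' p.1 p.2} := ⟨π, hπ, rfl⟩
  refine csInf_le ⟨0, ?_⟩ hmem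
  rintro c ⟨π', hπ', rfl⟩
  exact tsum_nonneg fun p => mul_nonneg (by positivity) (hπ'.1 _ _)

/-- Kantorovich-type lower bound for `W1` via a Lipschitz potential. -/
lemma W1_lip_bound (hμ : IsProb μ) (hν : IsProb ν) {g : V → ℝ}
    (hg : ∀ a b, |g a - g b| ≤ (H.dist a b : ℝ)) :
    |∑ v, g v * ν v - ∑ v, g v * μ v| ≤ W1 H μ ν := by
  classical
  have hne : {c | ∃ π, IsCoupling π μ ν ∧
      c = ∑' p : V × V, (H.dist p.1 p.2 : ℝ) * π p.1 p.2}.Nonempty :=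
    ⟨_, (fun a b => μ a * ν b), prod_coupling hμ hν, rfl⟩
  apply le_csInf hne
  rintro c ⟨π, hπ, rfl⟩
  have hrow : ∀ a, μ a = ∑ b, π a b := fun a => by
    rw [← tsum_fintype (L := .unconditional _)]; exact (hπ.2.1 a).symm
  have hcol : ∀ b, ν b = ∑ a, π a b := fun b => by
    rw [← tsum_fintype (L := .unconditional _)]; exact (hπ.2.2 b).symm
  have e1 : ∑ v, g v * ν v = ∑ a, ∑ b, g b * π a b := by
    rw [Finset.sum_comm]
    apply Finset.sum_congr rfl
    intro b _
    rw [hcol b, Finset.mul_sum]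
  have e2 : ∑ v, g v * μ v = ∑ a, ∑ b, g a * π a b := by
    apply Finset.sum_congr rfl
    intro a _
    rw [hrow a, Finset.mul_sum]
  have e3 : ∑' p : V × V, (H.dist p.1 p.2 : ℝ) * π p.1 p.2 =
      ∑ a, ∑ b, (H.dist a b : ℝ) * π a b := by
    rw [tsum_fintype, Fintype.sum_prod_type]
  rw [e1, e2, e3, ← Finset.sum_sub_distrib]
  calc |∑ a, (∑ b, g b * π a b - ∑ b, g a * π a b)|
      ≤ ∑ a, |∑ b, g b * π a b - ∑ b, g a * π a b| := Finset.abs_sum_le_sum_abs _ _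
    _ ≤ ∑ a, ∑ b, (H.dist a b : ℝ) * π a b := by
        apply Finset.sum_le_sum
        intro a _
        rw [← Finset.sum_sub_distrib]
        calc |∑ b, (g b * π a b - g a * π a b)|
            ≤ ∑ b, |g b * π a b - g a * π a b| := Finset.abs_sum_le_sum_abs _ _
          _ ≤ ∑ b, (H.dist a b : ℝ) * π a b := by
              apply Finset.sum_le_sum
              intro b _
              rw [← sub_mul, abs_mul, abs_of_nonneg (hπ.1 a b)]
              apply mul_le_mul_of_nonneg_right _ (hπ.1 a b)
              rw [abs_sub_comm]
              exact hg a b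

/-- Any admissible step (increment supported in an edge) has `W1 ≤ 1`. -/
lemma W1_step_le_one (hμ : IsProb μ) (hν : IsProb ν) {e : Set V} (he : e ∈ H.E)
    (hsupp : Function.support (fun v => ν v - μ v) ⊆ e) : W1 H μ ν ≤ 1 := by
  classical
  set p : V → ℝ := fun v => max (μ v - ν v) 0 with hp
  set q : V → ℝ := fun v => max (ν v - μ v) 0 with hq
  set m : ℝ := ∑ v, p v with hm
  have hp0 : ∀ v, 0 ≤ p v := fun v => le_max_right _ _
  have hq0 : ∀ v, 0 ≤ q v := fun v => le_max_right _ _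
  have hpq : ∀ v, p v - q v = μ v - ν v := fun v => by
    show max (μ v - ν v) 0 - max (ν v - μ v) 0 = μ v - ν v
    rcases le_total (μ v) (ν v) with hle | hle
    · rw [max_eq_right (by linarith : μ v - ν v ≤ 0),
        max_eq_left (by linarith : (0:ℝ) ≤ ν v - μ v)]
      ring
    · rw [max_eq_left (by linarith : (0:ℝ) ≤ μ v - ν v),
        max_eq_right (by linarith : ν v - μ v ≤ 0)]
      ring
  have hqsum : ∑ v, q v = m := by
    have : ∑ v, (p v - q v) = 0 := by
      have : ∑ v, (p v - q v) = ∑ v, μ v - ∑ v, ν v := by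
        rw [← Finset.sum_sub_distrib]
        exact Finset.sum_congr rfl fun v _ => hpq v
      rw [this, prob_sum hμ, prob_sum hν, sub_self]
    rw [Finset.sum_sub_distrib] at this
    rw [hm]; linarith
  have hm1 : m ≤ 1 := by
    rw [hm]
    calc ∑ v, p v ≤ ∑ v, μ v := Finset.sum_le_sum fun v _ => by
          rw [hp]; simp only [max_le_iff]
          exact ⟨by linarith [hν.1 v], hμ.1 v⟩
      _ = 1 := prob_sum hμ
  have hm0 : 0 ≤ m := Finset.sum_nonneg fun v _ => hp0 v
  have hpe : ∀ v, p v ≠ 0 → v ∈ e := by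
    intro v hv
    apply hsupp
    simp only [Function.mem_support]
    intro hcon
    apply hv
    rw [hp]
    simp only [max_eq_right_iff]
    linarith [sub_eq_zero.mp hcon]
  have hqe : ∀ v, q v ≠ 0 → v ∈ e := by
    intro v hv
    apply hsupp
    simp only [Function.mem_support]
    intro hcon
    apply hv
    rw [hq]
    simp only [max_eq_right_iff]
    linarith [sub_eq_zero.mp hcon]
  rcases eq_or_lt_of_le hm0 with hmz | hmz
  · -- m = 0 : μ = ν, use the diagonal coupling
    have hpz : ∀ v, p v = 0 := by
      intro v
      have := (Finset.sum_eq_zero_iff_of_nonneg (fun v _ => hp0 v)).mp hmz.symm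
      exact this v (Finset.mem_univ v)
    have hqz : ∀ v, q v = 0 := by
      intro v
      have h0 : ∑ v, q v = 0 := by rw [hqsum]; exact hmz.symm
      exact (Finset.sum_eq_zero_iff_of_nonneg (fun v _ => hq0 v)).mp h0 v (Finset.mem_univ v)
    have hμν : μ = ν := by
      funext v
      have h1 := hpq v
      rw [hpz v, hqz v] at h1
      linarith
    set π : V → V → ℝ := fun a b => if a = b then μ a else 0 with hπd
    have hcoup : IsCoupling π μ ν := by
      refine ⟨fun a b => by rw [hπd]; dsimp; split <;> simp [hμ.1], ?_, ?_⟩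
      · intro a
        rw [tsum_fintype]
        simp [hπd]
      · intro b
        rw [tsum_fintype]
        simp [hπd, hμν]
    calc W1 H μ ν ≤ ∑' pr : V × V, (H.dist pr.1 pr.2 : ℝ) * π pr.1 pr.2 :=
          W1_le_of_coupling hcoup
      _ = 0 := by
          rw [tsum_fintype, Fintype.sum_prod_type]
          apply Finset.sum_eq_zero
          intro a _
          apply Finset.sum_eq_zero
          intro b _
          rw [hπd]
          dsimp
          by_cases hab : a = b
          · subst hab
            rw [HLLYAux.dist_self]
            simp
          · simp [hab]
      _ ≤ 1 := zero_le_one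
  · -- m > 0
    set π : V → V → ℝ := fun a b => (if a = b then min (μ a) (ν a) else 0) + p a * q b / m
      with hπd
    have hcoup : IsCoupling π μ ν := by
      refine ⟨?_, ?_, ?_⟩
      · intro a b
        rw [hπd]
        dsimp
        have : 0 ≤ p a * q b / m := by positivity
        split
        · have := le_min (hμ.1 a) (hν.1 a)
          positivity
        · linarith
      · intro a
        rw [tsum_fintype]
        simp only [hπd]
        rw [Finset.sum_add_distrib]
        have e1 : ∑ b, (if a = b then min (μ a) (ν a) else 0) = min (μ a) (ν a) := by simp
        have e2 : ∑ b, p a * q b / m = p a := by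
          rw [← Finset.sum_div, ← Finset.mul_sum, hqsum]
          field_simp
        rw [e1, e2]
        rcases le_total (μ a) (ν a) with hle | hle
        · rw [min_eq_left hle, hp]
          simp only [max_eq_right_iff.mpr (by linarith : μ a - ν a ≤ 0)]
          ring
        · rw [min_eq_right hle, hp]
          simp only [max_eq_left_iff.mpr (by linarith : (0:ℝ) ≤ μ a - ν a)]
          ring
      · intro b
        rw [tsum_fintype]
        simp only [hπd]
        rw [Finset.sum_add_distrib]
        have e1 : ∑ a, (if a = b then min (μ a) (ν a) else 0) = min (μ b) (ν b) := by simp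
        have e2 : ∑ a, p a * q b / m = q b := by
          rw [← Finset.sum_div, ← Finset.sum_mul, ← hm]
          field_simp
        rw [e1, e2]
        rcases le_total (μ b) (ν b) with hle | hle
        · rw [min_eq_left hle, hq]
          simp only [max_eq_left_iff.mpr (by linarith : (0:ℝ) ≤ ν b - μ b)]
          ring
        · rw [min_eq_right hle, hq]
          simp only [max_eq_right_iff.mpr (by linarith : ν b - μ b ≤ 0)]
          ring
    calc W1 H μ ν ≤ ∑' pr : V × V, (H.dist pr.1 pr.2 : ℝ) * π pr.1 pr.2 :=
          W1_le_of_coupling hcoup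
      _ ≤ m := by
          rw [tsum_fintype, Fintype.sum_prod_type]
          have hbound : ∀ a b : V, (H.dist a b : ℝ) * π a b ≤
              (if a = b then (0:ℝ) else 0) + p a * q b / m := by
            intro a b
            rw [hπd]
            dsimp
            rw [mul_add]
            apply add_le_add
            · by_cases hab : a = b
              · subst hab
                rw [HLLYAux.dist_self]
                simp
              · simp [hab]
            · by_cases hz : p a * q b = 0
              · rw [hz, zero_div, mul_zero]
              · have hpa : p a ≠ 0 := fun hcon => hz (by rw [hcon, zero_mul])
                have hqb : q b ≠ 0 := fun hcon => hz (by rw [hcon, mul_zero])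
                have hdist : (H.dist a b : ℝ) ≤ 1 := by
                  exact_mod_cast dist_le_one_of_edge he (hpe a hpa) (hqe b hqb)
                have hnn : 0 ≤ p a * q b / m := by positivity
                nlinarith
          calc ∑ a, ∑ b, (H.dist a b : ℝ) * π a b
              ≤ ∑ a, ∑ b, ((if a = b then (0:ℝ) else 0) + p a * q b / m) :=
                Finset.sum_le_sum fun a _ => Finset.sum_le_sum fun b _ => hbound a b
            _ = m := by
                have hrow : ∀ a : V, ∑ b, ((if a = b then (0:ℝ) else 0) + p a * q b / m)
                    = p a := by
                  intro a
                  rw [Finset.sum_add_distrib]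
                  have e2 : ∑ b, p a * q b / m = p a := by
                    rw [← Finset.sum_div, ← Finset.mul_sum, hqsum]
                    field_simp
                  simp [e2]
                exact (Finset.sum_congr rfl fun a _ => hrow a).trans hm.symm
      _ ≤ 1 := hm1

end FiniteW1

section Potentials

open Hypergraph' HLLYAux

/-- The truncated distance potential at level `j`. -/
noncomputable def uu {V : Type*} (H : Hypergraph' V) (x : V) (j : ℕ) (v : V) : ℝ :=
  min (max ((H.dist x v : ℝ) - j) 0) 1

lemma clamp_mono_bound {a b : ℝ} (hab : a ≤ b) :
    min (max b 0) 1 - min (max a 0) 1 ≤ b - a ∧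
      0 ≤ min (max b 0) 1 - min (max a 0) 1 := by
  constructor <;> simp only [min_def, max_def] <;> split_ifs <;> linarith

lemma clamp_lip (a b : ℝ) : |min (max a 0) 1 - min (max b 0) 1| ≤ |a - b| := by
  rcases le_total a b with hab | hab
  · obtain ⟨h1, h2⟩ := clamp_mono_bound hab
    rw [abs_sub_comm, abs_of_nonneg h2, abs_sub_comm, abs_of_nonneg (by linarith)]
    exact h1
  · obtain ⟨h1, h2⟩ := clamp_mono_bound hab
    rw [abs_of_nonneg h2, abs_of_nonneg (by linarith)]
    exact h1

lemma uu_mem {V : Type*} (H : Hypergraph' V) (x : V) (j : ℕ) (v : V) :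
    uu H x j v ∈ Set.Icc (0:ℝ) 1 :=
  ⟨le_min (le_max_right _ _) zero_le_one, min_le_right _ _⟩

lemma uu_lip {V : Type*} {H : Hypergraph' V} (hconn : H.Connected) (x : V) (j : ℕ)
    (a b : V) : |uu H x j a - uu H x j b| ≤ (H.dist a b : ℝ) := by
  have h1 : H.dist x a ≤ H.dist x b + H.dist a b := by
    calc H.dist x a ≤ H.dist x b + H.dist b a := dist_triangle hconn x b a
      _ = H.dist x b + H.dist a b := by rw [dist_comm hconn a b]
  have h2 : H.dist x b ≤ H.dist x a + H.dist a b := dist_triangle hconn x a b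
  calc |uu H x j a - uu H x j b| ≤ |((H.dist x a : ℝ) - j) - ((H.dist x b : ℝ) - j)| :=
        clamp_lip _ _
    _ ≤ (H.dist a b : ℝ) := by
        have c1 := (Nat.cast_le (α := ℝ)).mpr h1
        have c2 := (Nat.cast_le (α := ℝ)).mpr h2
        push_cast at c1 c2
        rw [abs_sub_le_iff]
        constructor <;> linarith

lemma uu_eq_zero {V : Type*} {H : Hypergraph' V} {x : V} {j : ℕ} {v : V}
    (hle : H.dist x v ≤ j) : uu H x j v = 0 := by
  have hle' : (H.dist x v : ℝ) - j ≤ 0 := by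
    have := (Nat.cast_le (α := ℝ)).mpr hle; linarith
  rw [uu, max_eq_right hle', min_eq_left zero_le_one]

lemma uu_eq_one {V : Type*} {H : Hypergraph' V} {x : V} {j : ℕ} {v : V}
    (hge : j + 1 ≤ H.dist x v) : uu H x j v = 1 := by
  have hge' : (1:ℝ) ≤ (H.dist x v : ℝ) - j := by
    have := (Nat.cast_le (α := ℝ)).mpr hge; push_cast at this; linarith
  rw [uu, max_eq_left (by linarith), min_eq_right hge']

end Potentials

section MainLower

open Hypergraph' HLLYAux

set_option linter.unusedSectionVars false

variable {V : Type*} [Fintype V] {H : Hypergraph' V}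

/-- The central lower bound for `Wh`. -/
lemma Wh_lower (hconn : H.Connected)
    {h : ℝ → ℝ} {D0 D1 : ℝ} (hc : CostFn h D0 D1) (x : V) {d : ℕ} (hd2 : 2 ≤ d)
    {μ ν : V → ℝ} {a : ℝ} (ha : a ∈ Set.Icc (0:ℝ) 1)
    (hμ0 : ∑ v, uu H x 0 v * μ v ≤ 1 - a)
    (hμj : ∀ j : ℕ, 1 ≤ j → ∑ v, uu H x j v * μ v = 0)
    (hνj : ∀ j : ℕ, j + 2 ≤ d → 1 ≤ ∑ v, uu H x j v * ν v)
    (hνd : a ≤ ∑ v, uu H x (d-1) v * ν v)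
    (hadm : ∃ I ξ, WhAdmissible H μ ν I ξ) :
    2 * h a + ((d:ℝ) - 2) * h 1 ≤ Wh H h μ ν := by
  classical
  obtain ⟨I0, ξ0, hadm0⟩ := hadm
  have hne0 : {c | ∃ I ξ, WhAdmissible H μ ν I ξ ∧
      c = ∑ i ∈ Finset.range I, h (W1 H (ξ i) (ξ (i + 1)))}.Nonempty :=
    ⟨∑ i ∈ Finset.range I0, h (W1 H (ξ0 i) (ξ0 (i + 1))), I0, ξ0, hadm0, rfl⟩
  apply le_csInf hne0
  rintro c ⟨I, ξ, hadm, rfl⟩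
  clear hadm0
  have hprob := hadm.2.2.1
  set t : ℕ → ℝ := fun i => W1 H (ξ i) (ξ (i+1)) with ht
  have ht01 : ∀ i < I, t i ∈ Set.Icc (0:ℝ) 1 := by
    intro i hi
    obtain ⟨e, he, hsupp⟩ := hadm.2.2.2 i hi
    exact ⟨W1_nonneg H _ _,
      W1_step_le_one (hprob i (by omega)) (hprob (i+1) (by omega)) he hsupp⟩
  set δ : ℕ → ℕ → ℝ :=
    fun i j => ∑ v, uu H x j v * ξ (i+1) v - ∑ v, uu H x j v * ξ i v with hδ
  have hδt : ∀ i < I, ∀ j, |δ i j| ≤ t i := by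
    intro i hi j
    exact W1_lip_bound (hprob i (by omega)) (hprob (i+1) (by omega))
      (fun u v => uu_lip hconn x j u v)
  have hδalt : ∀ i j, δ i j = ∑ v, uu H x j v * (ξ (i+1) v - ξ i v) := by
    intro i j
    simp only [hδ]
    rw [← Finset.sum_sub_distrib]
    exact Finset.sum_congr rfl fun v _ => (mul_sub _ _ _).symm
  have hdiffsum : ∀ i < I, ∑ v, (ξ (i+1) v - ξ i v) = 0 := by
    intro i hi
    rw [Finset.sum_sub_distrib, prob_sum (hprob (i+1) (by omega)),
      prob_sum (hprob i (by omega)), sub_self]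
  have hsplit : ∀ i < I, ∀ j, δ i j ≠ 0 →
      (∃ v, ξ (i+1) v - ξ i v ≠ 0 ∧ H.dist x v ≤ j) ∧
      (∃ w, ξ (i+1) w - ξ i w ≠ 0 ∧ j + 1 ≤ H.dist x w) := by
    intro i hi j hne
    constructor
    · by_contra hcon
      push_neg at hcon
      apply hne
      rw [hδalt i j]
      have heq : ∀ v : V, uu H x j v * (ξ (i+1) v - ξ i v) = ξ (i+1) v - ξ i v := by
        intro v
        by_cases hv : ξ (i+1) v - ξ i v = 0
        · rw [hv, mul_zero]
        · rw [uu_eq_one (by have := hcon v hv; omega), one_mul]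
      rw [Finset.sum_congr rfl fun v _ => heq v]
      exact hdiffsum i hi
    · by_contra hcon
      push_neg at hcon
      apply hne
      rw [hδalt i j]
      apply Finset.sum_eq_zero
      intro v _
      by_cases hv : ξ (i+1) v - ξ i v = 0
      · rw [hv, mul_zero]
      · rw [uu_eq_zero (by have := hcon v hv; omega), zero_mul]
  have huniq : ∀ i < I, ∀ j k, δ i j ≠ 0 → δ i k ≠ 0 → j = k := by
    have key : ∀ i < I, ∀ j k, j < k → δ i j ≠ 0 → δ i k ≠ 0 → False := by
      intro i hi j k hjk hj hk
      obtain ⟨e, he, hsupp⟩ := hadm.2.2.2 i hi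
      obtain ⟨⟨v, hv, hvle⟩, -⟩ := hsplit i hi j hj
      obtain ⟨-, ⟨w, hw, hwge⟩⟩ := hsplit i hi k hk
      have hvw : H.dist v w ≤ 1 :=
        dist_le_one_of_edge he (hsupp (Function.mem_support.mpr hv))
          (hsupp (Function.mem_support.mpr hw))
      have htri : H.dist x w ≤ H.dist x v + H.dist v w := dist_triangle hconn x v w
      omega
    intro i hi j k hj hk
    rcases lt_trichotomy j k with hlt | heq | hgt
    · exact ((key i hi j k hlt hj hk).elim)
    · exact heq
    · exact ((key i hi k j hgt hk hj).elim)
  have htel : ∀ j, ∑ i ∈ Finset.range I, δ i j =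
      ∑ v, uu H x j v * ν v - ∑ v, uu H x j v * μ v := by
    intro j
    have hs := Finset.sum_range_sub (f := fun i => ∑ v, uu H x j v * ξ i v) I
    simp only [hδ]
    rw [hs, hadm.2.1, hadm.1]
  set T : ℕ → Finset ℕ := fun j => (Finset.range I).filter (fun i => δ i j ≠ 0) with hT
  set A : ℕ → ℝ := fun j => if j = 0 ∨ j = d - 1 then a else 1 with hA
  have hAmem : ∀ j, A j ∈ Set.Icc (0:ℝ) 1 := by
    intro j
    simp only [hA]
    split
    · exact ha
    · exact ⟨zero_le_one, le_rfl⟩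
  have hTsum : ∀ j < d, A j ≤ ∑ i ∈ T j, t i := by
    intro j hj
    have h1 : ∑ i ∈ T j, δ i j = ∑ i ∈ Finset.range I, δ i j := by
      simp only [hT]
      exact Finset.sum_filter_ne_zero _
    have h2 : A j ≤ ∑ v, uu H x j v * ν v - ∑ v, uu H x j v * μ v := by
      rcases Nat.eq_zero_or_pos j with rfl | hjpos
      · have hν1 : (1:ℝ) ≤ ∑ v, uu H x 0 v * ν v := hνj 0 (by omega)
        have hA0 : A 0 = a := by simp [hA]
        rw [hA0]
        linarith
      · by_cases hjd : j = d - 1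
        · subst hjd
          have hμ' : ∑ v, uu H x (d-1) v * μ v = 0 := hμj (d-1) (by omega)
          have hAd : A (d-1) = a := by simp [hA]
          rw [hAd, hμ']
          linarith
        · have hμ' : ∑ v, uu H x j v * μ v = 0 := hμj j (by omega)
          have hν1 : (1:ℝ) ≤ ∑ v, uu H x j v * ν v := hνj j (by omega)
          have hA1 : A j = 1 := by
            simp only [hA]
            rw [if_neg (by omega)]
          rw [hA1, hμ']
          linarith
    have h3 : ∑ i ∈ T j, δ i j ≤ ∑ i ∈ T j, t i := by
      apply Finset.sum_le_sum
      intro i hi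
      have hi' : i < I := Finset.mem_range.mp (Finset.mem_filter.mp hi).1
      exact le_trans (le_abs_self _) (hδt i hi' j)
    rw [htel j] at h1
    linarith
  have hkey : ∀ j < d, h (A j) ≤ ∑ i ∈ T j, h (t i) := by
    intro j hj
    apply cost_sum_bound' hc (T j) t (A j) ?_ (hAmem j) (hTsum j hj)
    intro i hi
    exact ht01 i (Finset.mem_range.mp (Finset.mem_filter.mp hi).1)
  have hdisj : (↑(Finset.range d) : Set ℕ).PairwiseDisjoint T := by
    intro j1 _ j2 _ hne
    simp only [Function.onFun]
    rw [Finset.disjoint_left]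
    intro i hi1 hi2
    have m1 := Finset.mem_filter.mp hi1
    have m2 := Finset.mem_filter.mp hi2
    exact hne (huniq i (Finset.mem_range.mp m1.1) j1 j2 m1.2 m2.2)
  have hsum1 : ∑ i ∈ (Finset.range d).biUnion T, h (t i) =
      ∑ j ∈ Finset.range d, ∑ i ∈ T j, h (t i) := Finset.sum_biUnion hdisj
  have hsub : (Finset.range d).biUnion T ⊆ Finset.range I :=
    Finset.biUnion_subset.mpr fun j _ => Finset.filter_subset _ _
  have hsum2 : ∑ i ∈ (Finset.range d).biUnion T, h (t i) ≤
      ∑ i ∈ Finset.range I, h (t i) := by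
    apply Finset.sum_le_sum_of_subset_of_nonneg hsub
    intro i hi _
    exact hc.nonneg _ (ht01 i (Finset.mem_range.mp hi))
  have hAsum : ∑ j ∈ Finset.range d, h (A j) = 2 * h a + ((d:ℝ) - 2) * h 1 := by
    obtain ⟨e', rfl⟩ : ∃ e', d = e' + 2 := ⟨d - 2, by omega⟩
    rw [Finset.sum_range_succ, Finset.sum_range_succ']
    have hA0 : A 0 = a := by simp [hA]
    have hAl : A (e' + 1) = a := by
      simp only [hA]
      rw [if_pos (Or.inr (by omega))]
    have hAm : ∀ i ∈ Finset.range e', h (A (i + 1)) = h 1 := by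
      intro i hi
      rw [Finset.mem_range] at hi
      congr 1
      simp only [hA]
      rw [if_neg (by omega)]
    rw [hA0, hAl, Finset.sum_congr rfl hAm, Finset.sum_const, Finset.card_range]
    push_cast
    ring
  calc 2 * h a + ((d:ℝ) - 2) * h 1 = ∑ j ∈ Finset.range d, h (A j) := hAsum.symm
    _ ≤ ∑ j ∈ Finset.range d, ∑ i ∈ T j, h (t i) :=
        Finset.sum_le_sum fun j hj => hkey j (Finset.mem_range.mp hj)
    _ = ∑ i ∈ (Finset.range d).biUnion T, h (t i) := hsum1.symm
    _ ≤ ∑ i ∈ Finset.range I, h (t i) := hsum2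

end MainLower

section Admissible

open Hypergraph' HLLYAux

variable {V : Type*} {H : Hypergraph' V}

lemma isProb_dirac (z : V) : IsProb (dirac z) := by
  refine ⟨fun v => by simp only [dirac]; split <;> norm_num, ?_, ?_⟩
  · apply Set.Finite.subset (Set.finite_singleton z)
    intro v hv
    simp only [Function.mem_support, dirac] at hv
    by_contra hne
    simp only [Set.mem_singleton_iff] at hne
    exact hv (if_neg hne)
  · exact tsum_ite_eq z 1

lemma adm_concat {μ ρ ν : V → ℝ} {I J : ℕ} {ξ ζ : ℕ → V → ℝ}
    (h1 : WhAdmissible H μ ρ I ξ) (h2 : WhAdmissible H ρ ν J ζ) :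
    WhAdmissible H μ ν (I + J) (fun i => if i ≤ I then ξ i else ζ (i - I)) := by
  obtain ⟨ha0, haI, hap, hae⟩ := h1
  obtain ⟨hb0, hbJ, hbp, hbe⟩ := h2
  have hcomp : ∀ i, I ≤ i → (if i ≤ I then ξ i else ζ (i - I)) = ζ (i - I) := by
    intro i hi
    rcases eq_or_lt_of_le hi with rfl | hlt
    · rw [if_pos le_rfl, Nat.sub_self, hb0, haI]
    · rw [if_neg (by omega)]
  refine ⟨by simp [ha0], ?_, ?_, ?_⟩
  · show (if I + J ≤ I then ξ (I + J) else ζ (I + J - I)) = ν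
    rw [hcomp (I + J) (by omega)]
    simpa using hbJ
  · intro i hi
    show IsProb (if i ≤ I then ξ i else ζ (i - I))
    by_cases hiI : i ≤ I
    · rw [if_pos hiI]; exact hap i hiI
    · rw [if_neg hiI]; exact hbp (i - I) (by omega)
  · intro i hi
    by_cases hiI : i < I
    · obtain ⟨e, he, hsupp⟩ := hae i hiI
      refine ⟨e, he, ?_⟩
      show Function.support (fun v => (if i + 1 ≤ I then ξ (i+1) else ζ (i+1-I)) v -
        (if i ≤ I then ξ i else ζ (i-I)) v) ⊆ e
      rw [if_pos (by omega : i ≤ I), if_pos (by omega : i + 1 ≤ I)]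
      exact hsupp
    · obtain ⟨e, he, hsupp⟩ := hbe (i - I) (by omega)
      refine ⟨e, he, ?_⟩
      show Function.support (fun v => (if i + 1 ≤ I then ξ (i+1) else ζ (i+1-I)) v -
        (if i ≤ I then ξ i else ζ (i-I)) v) ⊆ e
      rw [hcomp i (by omega), hcomp (i + 1) (by omega)]
      have heq : i + 1 - I = i - I + 1 := by omega
      rw [heq]
      exact hsupp

lemma adm_reverse {μ ν : V → ℝ} {I : ℕ} {ξ : ℕ → V → ℝ}
    (h1 : WhAdmissible H μ ν I ξ) :
    WhAdmissible H ν μ I (fun i => ξ (I - i)) := by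
  obtain ⟨ha0, haI, hap, hae⟩ := h1
  refine ⟨by simpa using haI, by simpa using ha0, fun i hi => hap (I - i) (by omega), ?_⟩
  intro i hi
  obtain ⟨e, he, hsupp⟩ := hae (I - i - 1) (by omega)
  refine ⟨e, he, ?_⟩
  intro v hv
  apply hsupp
  simp only [Function.mem_support] at hv ⊢
  have e1 : I - (i + 1) = I - i - 1 := by omega
  have e2 : I - i = I - i - 1 + 1 := by omega
  rw [e1] at hv
  rw [← e2]
  intro hcon
  apply hv
  rw [e2] at hcon ⊢
  linarith [hcon]

lemma adm_dirac_path {x y : V} {n : ℕ} (hp : H.IsPath x y n) :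
    ∃ ξ, WhAdmissible H (dirac x) (dirac y) n ξ := by
  obtain ⟨f, hf0, hfn, hstep⟩ := hp
  refine ⟨fun i => dirac (f i), by show dirac (f 0) = dirac x; rw [hf0],
    by show dirac (f n) = dirac y; rw [hfn], fun i _ => isProb_dirac _, ?_⟩
  intro i hi
  obtain ⟨e, he, h1, h2⟩ := hstep i hi
  refine ⟨e, he, ?_⟩
  intro v hv
  simp only [Function.mem_support, dirac] at hv
  by_cases hv1 : v = f (i + 1)
  · subst hv1; exact h2
  · by_cases hv2 : v = f i
    · subst hv2; exact h1
    · rw [if_neg hv1, if_neg hv2] at hv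
      simp at hv

end Admissible

section Spread

open Hypergraph' HLLYAux

set_option linter.unusedSectionVars false

variable {V : Type*} [Fintype V] {H : Hypergraph' V}

lemma adm_dirac_to_rw (z : V) {α : ℝ} (hα0 : 0 ≤ α) (hα1 : α ≤ 1)
    (hdeg : 0 < H.degree z) :
    ∃ I ξ, WhAdmissible H (dirac z) (rw H α z) I ξ := by
  classical
  have hfin : {v | H.Adj z v}.Finite := Set.toFinite _
  set N : Finset V := hfin.toFinset with hN
  have hcard : N.card = H.degree z := by
    rw [hN, degree, Set.ncard_eq_toFinset_card _ hfin]
  have hzN : z ∉ N := by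
    rw [hN, Set.Finite.mem_toFinset]
    intro hcon
    exact hcon.1 rfl
  set w : ℝ := (1 - α) / (H.degree z : ℝ) with hw
  have hw0 : 0 ≤ w := div_nonneg (by linarith) (Nat.cast_nonneg _)
  have hdegR : 0 < (H.degree z : ℝ) := by exact_mod_cast hdeg
  have hNw : (N.card : ℝ) * w = 1 - α := by
    rw [hcard, hw]
    field_simp
  set ρ : Finset V → V → ℝ :=
    fun s v => if v = z then 1 - s.card * w else if v ∈ s then w else 0 with hρ
  have hkey : ∀ s : Finset V, s ⊆ N →
      ∃ I ξ, WhAdmissible H (dirac z) (ρ s) I ξ := by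
    intro s
    induction s using Finset.induction_on with
    | empty =>
      intro _
      refine ⟨0, fun _ => dirac z, rfl, ?_, fun i _ => isProb_dirac _,
        fun i hi => absurd hi (by omega)⟩
      show dirac z = ρ ∅
      funext v
      simp only [hρ, dirac]
      by_cases hv : v = z
      · simp [hv]
      · simp [hv]
    | @insert b s hbs ih =>
      intro hsub
      obtain ⟨I, ξ, hadm⟩ := ih (fun v hv => hsub (Finset.mem_insert_of_mem hv))
      have hbN : b ∈ N := hsub (Finset.mem_insert_self b s)
      have hAdj : H.Adj z b := by rwa [hN, Set.Finite.mem_toFinset] at hbN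
      have hbz : b ≠ z := fun hcon => hAdj.1 hcon.symm
      have hcard' : (insert b s).card = s.card + 1 := Finset.card_insert_of_notMem hbs
      have hscard : (s.card : ℝ) * w ≤ 1 - α := by
        rw [← hNw]
        apply mul_le_mul_of_nonneg_right _ hw0
        exact_mod_cast Finset.card_le_card (fun v hv => hsub (Finset.mem_insert_of_mem hv))
      have hscard' : ((insert b s).card : ℝ) * w ≤ 1 - α := by
        rw [← hNw]
        apply mul_le_mul_of_nonneg_right _ hw0
        exact_mod_cast Finset.card_le_card hsub
      have hprob : ∀ u : Finset V, u ⊆ N → IsProb (ρ u) := by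
        intro u husub
        have huz : z ∉ u := fun hc => hzN (husub hc)
        have hucard : (u.card : ℝ) * w ≤ 1 - α := by
          rw [← hNw]
          apply mul_le_mul_of_nonneg_right _ hw0
          exact_mod_cast Finset.card_le_card husub
        refine ⟨?_, Set.toFinite _, ?_⟩
        · intro v
          simp only [hρ]
          split
          · linarith
          · split
            · exact hw0
            · exact le_refl 0
        · rw [tsum_fintype]
          have hdec : ρ u = fun v => (if v = z then 1 - u.card * w else 0) +
              (if v ∈ u then w else 0) := by
            funext v
            simp only [hρ]
            by_cases hv : v = z
            · subst hv
              rw [if_pos rfl, if_pos rfl, if_neg huz, add_zero]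
            · rw [if_neg hv, if_neg hv, zero_add]
          rw [hdec, Finset.sum_add_distrib]
          rw [Finset.sum_ite_eq' Finset.univ z (fun _ => 1 - (u.card : ℝ) * w)]
          rw [if_pos (Finset.mem_univ z)]
          rw [Finset.sum_ite_mem Finset.univ u (fun _ => w), Finset.univ_inter,
            Finset.sum_const, nsmul_eq_mul]
          ring
      refine ⟨I + 1, fun i => if i ≤ I then ξ i else ρ (insert b s), ?_, ?_, ?_, ?_⟩
      · show (if 0 ≤ I then ξ 0 else ρ (insert b s)) = dirac z
        simp [hadm.1]
      · show (if I + 1 ≤ I then ξ (I+1) else ρ (insert b s)) = ρ (insert b s)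
        rw [if_neg (by omega)]
      · intro i hi
        show IsProb (if i ≤ I then ξ i else ρ (insert b s))
        by_cases hiI : i ≤ I
        · rw [if_pos hiI]; exact hadm.2.2.1 i hiI
        · rw [if_neg hiI]
          exact hprob (insert b s) hsub
      · intro i hi
        by_cases hiI : i < I
        · obtain ⟨e, he, hsupp⟩ := hadm.2.2.2 i hiI
          refine ⟨e, he, ?_⟩
          show Function.support (fun v => (if i + 1 ≤ I then ξ (i+1) else ρ (insert b s)) v -
            (if i ≤ I then ξ i else ρ (insert b s)) v) ⊆ e
          rw [if_pos (by omega : i ≤ I), if_pos (by omega : i + 1 ≤ I)]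
          exact hsupp
        · obtain ⟨hne, e, he, hze, hbe⟩ := hAdj
          refine ⟨e, he, ?_⟩
          show Function.support (fun v => (if i + 1 ≤ I then ξ (i+1) else ρ (insert b s)) v -
            (if i ≤ I then ξ i else ρ (insert b s)) v) ⊆ e
          rw [if_pos (by omega : i ≤ I), if_neg (by omega : ¬ (i + 1 ≤ I)),
            (by omega : i = I), hadm.2.1]
          intro v hv
          simp only [Function.mem_support] at hv
          by_cases hvz : v = z
          · subst hvz; exact hze
          · by_cases hvb : v = b
            · subst hvb; exact hbe
            · exfalso
              apply hv
              simp only [hρ, if_neg hvz]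
              have : v ∈ insert b s ↔ v ∈ s := by
                rw [Finset.mem_insert]
                constructor
                · rintro (rfl | hmem)
                  · exact absurd rfl hvb
                  · exact hmem
                · exact Or.inr
              by_cases hvs : v ∈ s
              · rw [if_pos (this.mpr hvs), if_pos hvs, sub_self]
              · rw [if_neg (fun hc => hvs (this.mp hc)), if_neg hvs, sub_self]
  obtain ⟨I, ξ, hadm⟩ := hkey N (subset_refl N)
  refine ⟨I, ξ, ?_⟩
  have hρN : ρ N = rw H α z := by
    funext v
    simp only [hρ, _root_.rw]
    by_cases hv : v = z
    · subst hv
      rw [if_pos rfl, if_pos rfl, hNw]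
      ring
    · rw [if_neg hv, if_neg hv]
      by_cases hAdj : H.Adj z v
      · rw [if_pos ((Set.Finite.mem_toFinset hfin).mpr hAdj), if_pos hAdj, hw]
      · rw [if_neg (fun hc => hAdj ((Set.Finite.mem_toFinset hfin).mp hc)), if_neg hAdj]
  rwa [hρN] at hadm

lemma isProb_rw (z : V) {α : ℝ} (hα0 : 0 ≤ α) (hα1 : α ≤ 1)
    (hdeg : 0 < H.degree z) : IsProb (rw H α z) := by
  obtain ⟨I, ξ, hadm⟩ := adm_dirac_to_rw z hα0 hα1 hdeg
  have := hadm.2.2.1 I le_rfl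
  rwa [hadm.2.1] at this

lemma rw_sum (z : V) {α : ℝ} (hα0 : 0 ≤ α) (hα1 : α ≤ 1) (hdeg : 0 < H.degree z) :
    ∑ v, rw H α z v = 1 := by
  rw [← tsum_fintype (L := .unconditional _)]
  exact (isProb_rw z hα0 hα1 hdeg).2.2

end Spread

section CostGlobal

variable {h : ℝ → ℝ} {D0 D1 : ℝ}

lemma costfn_h1_pos (hc : CostFn h D0 D1) : 0 < h 1 := by
  have hev1 : ∀ᶠ t in nhdsWithin (0:ℝ) (Set.Ioi 0), D0/2 < h t / t :=
    hc.d0.eventually (eventually_gt_nhds (by linarith [hc.d0_pos]))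
  have hev2 : ∀ᶠ t in nhdsWithin (0:ℝ) (Set.Ioi 0), t ∈ Set.Ioo (0:ℝ) 1 :=
    Filter.eventually_of_mem (Ioo_mem_nhdsGT_of_mem ⟨le_rfl, one_pos⟩) fun t ht => ht
  obtain ⟨t, ht1, ht2⟩ := (hev1.and hev2).exists
  have hq : 0 < h t / t := lt_trans (half_pos hc.d0_pos) ht1
  have htpos : 0 < h t := by
    rcases div_pos_iff.mp hq with ⟨h1, -⟩ | ⟨-, h2⟩
    · exact h1
    · linarith [ht2.1]
  exact lt_of_lt_of_le htpos
    (hc.mono ⟨ht2.1.le, ht2.2.le⟩ ⟨zero_le_one, le_rfl⟩ ht2.2.le)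

lemma costfn_D1_nonneg (hc : CostFn h D0 D1) : 0 ≤ D1 := by
  apply ge_of_tendsto hc.d1
  apply Filter.eventually_of_mem (Ioo_mem_nhdsLT_of_mem (⟨one_pos, le_rfl⟩ :
    (1:ℝ) ∈ Set.Ioc 0 1))
  intro t ht
  apply div_nonneg _ (by linarith [ht.2])
  have := hc.mono (⟨ht.1.le, ht.2.le⟩ : t ∈ Set.Icc (0:ℝ) 1) ⟨zero_le_one, le_rfl⟩ ht.2.le
  linarith

end CostGlobal

section FinalFinite

open Hypergraph' HLLYAux

set_option linter.unusedSectionVars false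

variable {V : Type*} [Fintype V] {H : Hypergraph' V}

lemma Wh_le_of_adm {h : ℝ → ℝ} {D0 D1 : ℝ} (hc : CostFn h D0 D1)
    {μ ν : V → ℝ} {I : ℕ} {ξ : ℕ → V → ℝ} (hadm : WhAdmissible H μ ν I ξ) :
    Wh H h μ ν ≤ (I : ℝ) * h 1 := by
  have hstep : ∀ (I' : ℕ) (ξ' : ℕ → V → ℝ), WhAdmissible H μ ν I' ξ' → ∀ i < I',
      W1 H (ξ' i) (ξ' (i+1)) ∈ Set.Icc (0:ℝ) 1 := by
    intro I' ξ' hadm' i hi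
    obtain ⟨e, he, hsupp⟩ := hadm'.2.2.2 i hi
    exact ⟨W1_nonneg H _ _, W1_step_le_one (hadm'.2.2.1 i (by omega))
      (hadm'.2.2.1 (i+1) (by omega)) he hsupp⟩
  have hbdd : ∀ c ∈ {c | ∃ I ξ, WhAdmissible H μ ν I ξ ∧
      c = ∑ i ∈ Finset.range I, h (W1 H (ξ i) (ξ (i+1)))}, (0:ℝ) ≤ c := by
    rintro c ⟨I', ξ', hadm', rfl⟩
    apply Finset.sum_nonneg
    intro i hi
    exact hc.nonneg _ (hstep I' ξ' hadm' i (Finset.mem_range.mp hi))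
  have hmem : (∑ i ∈ Finset.range I, h (W1 H (ξ i) (ξ (i+1)))) ∈
      {c | ∃ I ξ, WhAdmissible H μ ν I ξ ∧
        c = ∑ i ∈ Finset.range I, h (W1 H (ξ i) (ξ (i+1)))} := ⟨I, ξ, hadm, rfl⟩
  calc Wh H h μ ν ≤ ∑ i ∈ Finset.range I, h (W1 H (ξ i) (ξ (i+1))) :=
        csInf_le ⟨0, hbdd⟩ hmem
    _ ≤ ∑ _i ∈ Finset.range I, h 1 := by
        apply Finset.sum_le_sum
        intro i hi
        exact hc.mono (hstep I ξ hadm i (Finset.mem_range.mp hi)) ⟨zero_le_one, le_rfl⟩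
          (hstep I ξ hadm i (Finset.mem_range.mp hi)).2
    _ = (I : ℝ) * h 1 := by rw [Finset.sum_const, Finset.card_range, nsmul_eq_mul]

lemma deg_pos (hconn : H.Connected) {x y : V} (hd : 1 ≤ H.dist x y) :
    0 < H.degree x := by
  obtain ⟨f, hf0, hfn, hstep⟩ := dist_isPath hconn x y
  have hne : f 1 ≠ x := by
    intro hcon
    have heq : H.dist x y - 1 + 1 = H.dist x y := by omega
    have hp : H.IsPath x y (H.dist x y - 1) := by
      refine ⟨fun i => f (i+1), ?_, ?_, ?_⟩
      · show f (0 + 1) = x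
        simpa using hcon
      · show f (H.dist x y - 1 + 1) = y
        rw [heq, hfn]
      · intro i hi
        obtain ⟨e, he, h1, h2⟩ := hstep (i+1) (by omega)
        exact ⟨e, he, h1, h2⟩
    have := dist_le hp
    omega
  obtain ⟨e, he, h0, h1⟩ := hstep 0 (by omega)
  rw [hf0] at h0
  have hadj : H.Adj x (f 1) := ⟨fun hcon => hne hcon.symm, e, he, h0, h1⟩
  rw [Hypergraph'.degree, Set.ncard_pos (Set.toFinite _)]
  exact ⟨f 1, hadj⟩

lemma rw_nonneg {z v : V} {α : ℝ} (hα0 : 0 ≤ α) (hα1 : α ≤ 1) :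
    0 ≤ rw H α z v := by
  simp only [_root_.rw]
  split
  · exact hα0
  · split
    · exact div_nonneg (by linarith) (Nat.cast_nonneg _)
    · exact le_rfl

lemma rw_supp_dist {z v : V} {α : ℝ} (hv : rw H α z v ≠ 0) : H.dist z v ≤ 1 := by
  simp only [_root_.rw] at hv
  by_cases hvz : v = z
  · subst hvz
    rw [HLLYAux.dist_self]
    omega
  · rw [if_neg hvz] at hv
    by_cases hadj : H.Adj z v
    · obtain ⟨-, e, he, h1, h2⟩ := hadj
      exact dist_le_one_of_edge he h1 h2
    · rw [if_neg hadj] at hv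
      exact absurd rfl hv

lemma sum_uu_dirac (x z : V) (j : ℕ) : ∑ v, uu H x j v * dirac z v = uu H x j z := by
  have heq : ∀ v : V, uu H x j v * dirac z v = if v = z then uu H x j v else 0 := by
    intro v
    simp only [dirac]
    split
    · rw [mul_one]
    · rw [mul_zero]
  rw [Finset.sum_congr rfl fun v _ => heq v, Finset.sum_ite_eq' Finset.univ z,
    if_pos (Finset.mem_univ z)]

lemma ORic_bound (hconn : H.Connected) {h : ℝ → ℝ} {D0 D1 : ℝ} (hc : CostFn h D0 D1)
    (hh1 : 0 < h 1) {x y : V} (hd : 2 ≤ H.dist x y) {α : ℝ} (hα : α ∈ Set.Ioo (0:ℝ) 1) :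
    ORic H h α x y ≤ 2 * (h 1 - h α) / ((H.dist x y : ℝ) * h 1) := by
  classical
  have hα0 : (0:ℝ) ≤ α := hα.1.le
  have hα1 : α ≤ 1 := hα.2.le
  have hdge : (2:ℝ) ≤ (H.dist x y : ℝ) := by exact_mod_cast hd
  have hdxx : H.dist x x = 0 := HLLYAux.dist_self x
  have hdegx : 0 < H.degree x := deg_pos hconn (y := y) (by omega)
  have hdegy : 0 < H.degree y := by
    apply deg_pos hconn (y := x)
    rw [dist_comm hconn y x]
    omega
  have hpath := dist_isPath hconn x y
  obtain ⟨ξp, hadmp⟩ := adm_dirac_path hpath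
  have hBub : Wh H h (dirac x) (dirac y) ≤ (H.dist x y : ℝ) * h 1 :=
    Wh_le_of_adm hc hadmp
  have hBlb : 2 * h 1 + ((H.dist x y : ℝ) - 2) * h 1 ≤ Wh H h (dirac x) (dirac y) := by
    apply Wh_lower hconn hc x hd (a := 1) ⟨zero_le_one, le_rfl⟩
    · rw [sum_uu_dirac, uu_eq_zero (by omega)]
      norm_num
    · intro j hj
      rw [sum_uu_dirac, uu_eq_zero (by omega)]
    · intro j hj
      rw [sum_uu_dirac, uu_eq_one (by omega)]
    · rw [sum_uu_dirac, uu_eq_one (by omega)]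
    · exact ⟨_, ξp, hadmp⟩
  have hB : Wh H h (dirac x) (dirac y) = (H.dist x y : ℝ) * h 1 := by
    apply le_antisymm hBub
    calc (H.dist x y : ℝ) * h 1 = 2 * h 1 + ((H.dist x y : ℝ) - 2) * h 1 := by ring
      _ ≤ _ := hBlb
  obtain ⟨I1, ξ1, hadm1⟩ := adm_dirac_to_rw x hα0 hα1 hdegx
  obtain ⟨I2, ξ2, hadm2⟩ := adm_dirac_to_rw y hα0 hα1 hdegy
  have hadmA : ∃ I ξ, WhAdmissible H (rw H α x) (rw H α y) I ξ :=
    ⟨_, _, adm_concat (adm_concat (adm_reverse hadm1) hadmp) hadm2⟩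
  have hsumrwx : ∑ v, rw H α x v = 1 := rw_sum x hα0 hα1 hdegx
  have hsumrwy : ∑ v, rw H α y v = 1 := rw_sum y hα0 hα1 hdegy
  have hAlb : 2 * h α + ((H.dist x y : ℝ) - 2) * h 1 ≤
      Wh H h (rw H α x) (rw H α y) := by
    apply Wh_lower hconn hc x hd ⟨hα0, hα1⟩
    · -- level 0 for the source
      have hper : ∀ v : V, uu H x 0 v * rw H α x v ≤
          rw H α x v - (if v = x then α else 0) := by
        intro v
        by_cases hvx : v = x
        · subst hvx
          rw [if_pos rfl, uu_eq_zero (by omega), zero_mul]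
          have : rw H α v v = α := if_pos rfl
          rw [this]
          linarith
        · rw [if_neg hvx, sub_zero]
          exact mul_le_of_le_one_left (rw_nonneg hα0 hα1) (uu_mem H x 0 v).2
      calc ∑ v, uu H x 0 v * rw H α x v
          ≤ ∑ v, (rw H α x v - (if v = x then α else 0)) :=
            Finset.sum_le_sum fun v _ => hper v
        _ = 1 - α := by
            rw [Finset.sum_sub_distrib, hsumrwx,
              Finset.sum_ite_eq' Finset.univ x (fun _ => α), if_pos (Finset.mem_univ x)]
    · intro j hj
      apply Finset.sum_eq_zero
      intro v _
      by_cases h0 : rw H α x v = 0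
      · rw [h0, mul_zero]
      · rw [uu_eq_zero (le_trans (rw_supp_dist h0) (by omega)), zero_mul]
    · intro j hj
      have heq : ∑ v, uu H x j v * rw H α y v = ∑ v, rw H α y v := by
        apply Finset.sum_congr rfl
        intro v _
        by_cases h0 : rw H α y v = 0
        · rw [h0, mul_zero]
        · have hdyv : H.dist y v ≤ 1 := rw_supp_dist h0
          have htri : H.dist x y ≤ H.dist x v + H.dist v y := dist_triangle hconn x v y
          have hcomm : H.dist v y = H.dist y v := dist_comm hconn v y
          rw [uu_eq_one (by omega), one_mul]
      rw [heq, hsumrwy]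
    · have hterm : uu H x (H.dist x y - 1) y * rw H α y y = α := by
        rw [uu_eq_one (by omega), one_mul]
        exact if_pos rfl
      calc α = uu H x (H.dist x y - 1) y * rw H α y y := hterm.symm
        _ ≤ ∑ v, uu H x (H.dist x y - 1) v * rw H α y v := by
            apply Finset.single_le_sum (f := fun v => uu H x (H.dist x y - 1) v * rw H α y v)
              _ (Finset.mem_univ y)
            intro v _
            exact mul_nonneg (uu_mem H x _ v).1 (rw_nonneg hα0 hα1)
    · exact hadmA
  rw [ORic, hB]
  have hBpos : 0 < (H.dist x y : ℝ) * h 1 := by nlinarith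
  have hαmem : α ∈ Set.Icc (0:ℝ) 1 := ⟨hα0, hα1⟩
  have hhα : 0 ≤ h α := hc.nonneg α hαmem
  have hnum : 0 ≤ 2 * h α + ((H.dist x y : ℝ) - 2) * h 1 := by nlinarith
  have hdiv : (2 * h α + ((H.dist x y : ℝ) - 2) * h 1) / ((H.dist x y : ℝ) * h 1) ≤
      Wh H h (rw H α x) (rw H α y) / ((H.dist x y : ℝ) * h 1) :=
    (div_le_div_iff_of_pos_right hBpos).mpr hAlb
  have heq : 1 - (2 * h α + ((H.dist x y : ℝ) - 2) * h 1) / ((H.dist x y : ℝ) * h 1) =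
      2 * (h 1 - h α) / ((H.dist x y : ℝ) * h 1) := by
    field_simp
    ring
  linarith

end FinalFinite

/-- Upper bound for the `h`-LLY–Ricci curvature between distant vertices. -/
theorem hLLY_upper_bound {V : Type*} (H : Hypergraph' V)
    (hconn : H.Connected) (hlf : H.LocallyFinite) (hsimp : H.Simple)
    (h : ℝ → ℝ) (D0 D1 : ℝ) (hc : CostFn h D0 D1)
    (x y : V) (hd : 2 ≤ H.dist x y) :
    hLLY H h x y ≤ 2 * D1 / (h 1 * (H.dist x y : ℝ)) := by
  classical
  have hh1 : 0 < h 1 := costfn_h1_pos hc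
  have hD1 : 0 ≤ D1 := costfn_D1_nonneg hc
  have hdge : (2:ℝ) ≤ (H.dist x y : ℝ) := by exact_mod_cast hd
  have hdh : 0 < h 1 * (H.dist x y : ℝ) := by nlinarith
  have hL0 : 0 ≤ 2 * D1 / (h 1 * (H.dist x y : ℝ)) :=
    div_nonneg (by linarith) hdh.le
  rw [hLLY, Filter.liminf_eq]
  cases finite_or_infinite V with
  | inr hinfV =>
    have hOR : ∀ α : ℝ, ORic H h α x y = 1 := by
      intro α
      rw [ORic, Wh_eq_zero_of_infinite hconn hc.zero,
        Wh_eq_zero_of_infinite hconn hc.zero]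
      norm_num
    have hnb : ¬ BddAbove {a | ∀ᶠ α in nhdsWithin (1:ℝ) (Set.Iio 1),
        a ≤ ORic H h α x y / (1 - α)} := by
      rintro ⟨b, hb⟩
      set c : ℝ := max (b + 1) 1 with hcdef
      have hc1 : (1:ℝ) ≤ c := le_max_right _ _
      have hcpos : (0:ℝ) < c := by linarith
      have hmem : c ∈ {a | ∀ᶠ α in nhdsWithin (1:ℝ) (Set.Iio 1),
          a ≤ ORic H h α x y / (1 - α)} := by
        have hset : Set.Ioo (1 - 1/c) 1 ∈ nhdsWithin (1:ℝ) (Set.Iio 1) :=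
          Ioo_mem_nhdsLT_of_mem ⟨by
            have := one_div_pos.mpr hcpos
            linarith, le_rfl⟩
        filter_upwards [hset] with α hα
        rw [hOR α, one_div]
        have h1α : 0 < 1 - α := by linarith [hα.2]
        rw [le_inv_comm₀ hcpos h1α]
        have hod : (1:ℝ)/c = c⁻¹ := one_div c
        linarith [hα.1]
      have h1 := hb hmem
      have h2 : b + 1 ≤ c := le_max_left _ _
      linarith
    rw [Real.sSup_of_not_bddAbove hnb]
    exact hL0
  | inl hfinV =>
    have : Fintype V := Fintype.ofFinite V
    apply Real.sSup_le _ hL0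
    intro a ha
    apply le_of_forall_pos_le_add
    intro ε hε
    set ε' : ℝ := ε * (h 1 * (H.dist x y : ℝ)) / 2 with hε'
    have hε'pos : 0 < ε' := by
      apply div_pos (mul_pos hε hdh) two_pos
    have hev1 : ∀ᶠ t in nhdsWithin (1:ℝ) (Set.Iio 1),
        (h 1 - h t)/(1 - t) < D1 + ε' :=
      hc.d1.eventually (eventually_lt_nhds (by linarith))
    have hev2 : ∀ᶠ t in nhdsWithin (1:ℝ) (Set.Iio 1), t ∈ Set.Ioo (0:ℝ) 1 :=
      Filter.eventually_of_mem (Ioo_mem_nhdsLT_of_mem (⟨one_pos, le_rfl⟩ :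
        (1:ℝ) ∈ Set.Ioc 0 1)) fun t ht => ht
    have hevf : ∀ᶠ α in nhdsWithin (1:ℝ) (Set.Iio 1),
        ORic H h α x y / (1 - α) ≤ 2 * D1 / (h 1 * (H.dist x y : ℝ)) + ε := by
      filter_upwards [hev1, hev2] with α hQ hα
      have h1α : 0 < 1 - α := by linarith [hα.2]
      have hOR := ORic_bound hconn hc hh1 hd hα
      have hstep : ORic H h α x y / (1 - α) ≤
          (2 * (h 1 - h α) / ((H.dist x y : ℝ) * h 1)) / (1 - α) :=
        (div_le_div_iff_of_pos_right h1α).mpr hOR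
      have heq : (2 * (h 1 - h α) / ((H.dist x y : ℝ) * h 1)) / (1 - α)
          = (2 / ((H.dist x y : ℝ) * h 1)) * ((h 1 - h α)/(1 - α)) := by
        field_simp
      have hfac : (0:ℝ) ≤ 2 / ((H.dist x y : ℝ) * h 1) := by positivity
      have hmul : (2 / ((H.dist x y : ℝ) * h 1)) * ((h 1 - h α)/(1 - α)) ≤
          (2 / ((H.dist x y : ℝ) * h 1)) * (D1 + ε') :=
        mul_le_mul_of_nonneg_left hQ.le hfac
      have hLeq : (2 / ((H.dist x y : ℝ) * h 1)) * (D1 + ε') =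
          2 * D1 / (h 1 * (H.dist x y : ℝ)) + ε := by
        rw [hε']
        field_simp
      linarith
    simp only [Set.mem_setOf_eq] at ha
    obtain ⟨α, hα1, hα2⟩ := (ha.and hevf).exists
    linarith
end
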